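/- arXiv:1303.3277 — 5 statements merged into one kernel-verified Lean document; each statement's English description precedes it below -/
import Mathlib

section
/- Let α ≥ 1 be real and θ, γ > 0. For ε > 0 set λ_ε = θ/(γ·ε^α) and M_ε = ⌊(θ/γ)^{1/α}/ε⌋. Then there exist constants C > 0 and ε₀ > 0 such that for all 0 < ε ≤ ε₀: ∑_{k ≥ 4M_ε} π_{λ_ε}(k) ≤ C·2^{−α·M_ε}. -/
open scoped BigOperators

/-- Normalizing constant `Z(λ) = 1 + ∑_{j=1}^∞ λ^j/(j!)^α` (real power `(j!)^α`). -/
noncomputable def Zfun (α lam : ℝ) : ℝ :=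
  1 + ∑' j : ℕ, lam ^ (j + 1) / ((Nat.factorial (j + 1) : ℝ)) ^ α

/-- Stationary distribution `π_λ(k) = (λ^k/(k!)^α)/Z(λ)`. -/
noncomputable def statPi (α lam : ℝ) (k : ℕ) : ℝ :=
  (lam ^ k / ((Nat.factorial k : ℝ)) ^ α) / Zfun α lam

lemma aux_geom (x r : ℝ) (hx : 0 ≤ x) (hr : 0 ≤ r) (n : ℕ)
    (h : ∀ k : ℕ, n ≤ k → x / ((k : ℝ) + 1) ≤ r) :
    ∀ i : ℕ, x ^ (n + i) / (Nat.factorial (n + i) : ℝ)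
      ≤ x ^ n / (Nat.factorial n : ℝ) * r ^ i := by
  intro i
  induction i with
  | zero => simp
  | succ i ih =>
    have hfpos : (0:ℝ) < (Nat.factorial (n + i) : ℝ) := by
      exact_mod_cast Nat.factorial_pos _
    have hfpos' : (0:ℝ) < (Nat.factorial (n + (i+1)) : ℝ) := by
      exact_mod_cast Nat.factorial_pos _
    have hfac : (Nat.factorial (n + (i+1)) : ℝ)
        = ((n + i : ℕ) + 1 : ℝ) * (Nat.factorial (n + i) : ℝ) := by
      have : n + (i+1) = (n + i) + 1 := by ring
      rw [this, Nat.factorial_succ]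
      push_cast; ring
    have key : x ^ (n + (i+1)) / (Nat.factorial (n + (i+1)) : ℝ)
        = (x ^ (n + i) / (Nat.factorial (n + i) : ℝ)) * (x / ((n + i : ℕ) + 1 : ℝ)) := by
      rw [hfac, show n + (i+1) = (n + i) + 1 from by ring, pow_succ,
        div_mul_div_comm, mul_comm ((n + i : ℕ) + 1 : ℝ)]
    rw [key]
    have h1 : x / ((n + i : ℕ) + 1 : ℝ) ≤ r := h (n + i) (Nat.le_add_right _ _)
    have h2 : 0 ≤ x / ((n + i : ℕ) + 1 : ℝ) := by positivity
    have h3 : 0 ≤ x ^ n / (Nat.factorial n : ℝ) * r ^ i := by positivity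
    calc (x ^ (n + i) / (Nat.factorial (n + i) : ℝ)) * (x / ((n + i : ℕ) + 1 : ℝ))
        ≤ (x ^ n / (Nat.factorial n : ℝ) * r ^ i) * r := by
          apply mul_le_mul ih h1 h2 h3
      _ = x ^ n / (Nat.factorial n : ℝ) * r ^ (i+1) := by ring

set_option maxHeartbeats 1000000 in
theorem stationary_distribution_tail_estimate
    (α θ γ : ℝ) (hα : 1 ≤ α) (hθ : 0 < θ) (hγ : 0 < γ) :
    ∃ C > (0 : ℝ), ∃ ε₀ > (0 : ℝ), ∀ ε : ℝ, 0 < ε → ε ≤ ε₀ →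
      (∑' k : {k : ℕ // 4 * ⌊(θ / γ) ^ (1 / α) / ε⌋₊ ≤ k},
          statPi α (θ / (γ * ε ^ α)) k)
        ≤ C * (2 : ℝ) ^ (-(α * (⌊(θ / γ) ^ (1 / α) / ε⌋₊ : ℝ))) := by
  have hαpos : (0:ℝ) < α := lt_of_lt_of_le one_pos hα
  have hc : (0:ℝ) < (θ / γ) ^ (1 / α) := Real.rpow_pos_of_pos (div_pos hθ hγ) _
  refine ⟨2, by norm_num, (θ / γ) ^ (1 / α) / 4, by exact div_pos hc (by norm_num), ?_⟩
  intro ε hε hε0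
  set x : ℝ := (θ / γ) ^ (1 / α) / ε with hxdef
  set M : ℕ := ⌊x⌋₊ with hMdef
  set lam : ℝ := θ / (γ * ε ^ α) with hlamdef
  have hxpos : 0 < x := div_pos hc hε
  have hx4 : (4:ℝ) ≤ x := by
    rw [hxdef, le_div_iff₀ hε]
    have := (le_div_iff₀ (by norm_num : (0:ℝ) < 4)).mp hε0
    linarith
  have hM4 : 4 ≤ M := Nat.le_floor (by exact_mod_cast hx4)
  have hM4r : (4:ℝ) ≤ (M:ℝ) := by exact_mod_cast hM4
  have hMx : (M:ℝ) ≤ x := Nat.floor_le hxpos.le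
  have hxM1 : x < (M:ℝ) + 1 := Nat.lt_floor_add_one x
  -- lam = x ^ α
  have hlam : lam = x ^ α := by
    rw [hlamdef, hxdef, Real.div_rpow hc.le hε.le,
      ← Real.rpow_mul (div_pos hθ hγ).le, one_div_mul_cancel (ne_of_gt hαpos),
      Real.rpow_one, div_div]
  have hlampos : 0 < lam := hlam ▸ Real.rpow_pos_of_pos hxpos _
  -- b k
  set b : ℕ → ℝ := fun k => x ^ k / (Nat.factorial k : ℝ) with hbdef
  have hbpos : ∀ k, 0 < b k := by
    intro k
    have : (0:ℝ) < (Nat.factorial k : ℝ) := by exact_mod_cast Nat.factorial_pos k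
    exact div_pos (pow_pos hxpos _) this
  have ha : ∀ k : ℕ, lam ^ k / ((Nat.factorial k : ℝ)) ^ α = (b k) ^ α := by
    intro k
    have h1 : lam ^ k = (x ^ k) ^ α := by
      rw [hlam, ← Real.rpow_natCast (x ^ α) k, ← Real.rpow_natCast x k,
        ← Real.rpow_mul hxpos.le, ← Real.rpow_mul hxpos.le, mul_comm]
    have h2 : (0:ℝ) ≤ (Nat.factorial k : ℝ) := by positivity
    rw [h1, hbdef, ← Real.div_rpow (pow_nonneg hxpos.le k) h2]
  -- Z bounds
  have hsum1 : Summable (fun j : ℕ => lam ^ (j + 1) / ((Nat.factorial (j + 1) : ℝ)) ^ α) := by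
    have hs : Summable (fun j : ℕ => lam ^ (j + 1) / (Nat.factorial (j + 1) : ℝ)) := by
      have := Real.summable_pow_div_factorial lam
      exact (summable_nat_add_iff 1).mpr this
    apply Summable.of_nonneg_of_le (fun j => by positivity) _ hs
    intro j
    apply div_le_div_of_nonneg_left (by positivity) (by positivity)
    have hf1 : (1:ℝ) ≤ (Nat.factorial (j + 1) : ℝ) := by
      exact_mod_cast Nat.one_le_iff_ne_zero.mpr (Nat.factorial_ne_zero _)
    calc (Nat.factorial (j + 1) : ℝ) = (Nat.factorial (j + 1) : ℝ) ^ (1:ℝ) := (Real.rpow_one _).symm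
      _ ≤ (Nat.factorial (j + 1) : ℝ) ^ α := Real.rpow_le_rpow_of_exponent_le hf1 hα
  have hZ2 : (b (2 * M)) ^ α ≤ Zfun α lam := by
    have h2M : 2 * M - 1 + 1 = 2 * M := by omega
    have hterm := Summable.le_tsum hsum1 (2 * M - 1) (fun j _ => by positivity)
    rw [h2M, ha (2 * M)] at hterm
    have : (0:ℝ) ≤ 1 := zero_le_one
    unfold Zfun
    linarith
  have hZpos : 0 < Zfun α lam := lt_of_lt_of_le (Real.rpow_pos_of_pos (hbpos _) _) hZ2
  -- tail term bound
  have htail : ∀ i : ℕ, statPi α lam (4 * M + i)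
      ≤ ((b (4 * M)) ^ α / Zfun α lam) * (1/2 : ℝ) ^ i := by
    intro i
    have hhalf : ∀ k : ℕ, 4 * M ≤ k → x / ((k : ℝ) + 1) ≤ 1/2 := by
      intro k hk
      have hkr : (4:ℝ) * M ≤ (k:ℝ) := by exact_mod_cast hk
      rw [div_le_iff₀ (by positivity)]
      linarith
    have hb := aux_geom x (1/2) hxpos.le (by norm_num) (4 * M) hhalf i
    have hbub : b (4 * M + i) ≤ b (4 * M) * (1/2:ℝ) ^ i := hb
    have hrp : (b (4 * M + i)) ^ α ≤ (b (4 * M)) ^ α * (1/2:ℝ) ^ i := by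
      calc (b (4 * M + i)) ^ α ≤ (b (4 * M) * (1/2:ℝ) ^ i) ^ α :=
            Real.rpow_le_rpow (hbpos _).le hbub hαpos.le
        _ = (b (4 * M)) ^ α * ((1/2:ℝ) ^ i) ^ α :=
            Real.mul_rpow (hbpos _).le (by positivity)
        _ ≤ (b (4 * M)) ^ α * (1/2:ℝ) ^ i := by
            apply mul_le_mul_of_nonneg_left _ (Real.rpow_nonneg (hbpos _).le _)
            rw [← Real.rpow_natCast ((1:ℝ)/2) i, ← Real.rpow_mul (by norm_num)]
            apply Real.rpow_le_rpow_of_exponent_ge (by norm_num) (by norm_num)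
            nlinarith [mul_nonneg (Nat.cast_nonneg i : (0:ℝ) ≤ i) (sub_nonneg.mpr hα)]
    unfold statPi
    rw [ha]
    have heq : (b (4 * M)) ^ α / Zfun α lam * (1/2:ℝ) ^ i
        = ((b (4 * M)) ^ α * (1/2:ℝ) ^ i) / Zfun α lam := by ring
    rw [heq]
    exact (div_le_div_iff_of_pos_right hZpos).mpr hrp
  -- summability of tail
  have hgeo : Summable (fun i : ℕ => ((b (4 * M)) ^ α / Zfun α lam) * (1/2:ℝ) ^ i) :=
    (summable_geometric_of_lt_one (by norm_num) (by norm_num)).mul_left _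
  have hsumt : Summable (fun i : ℕ => statPi α lam (4 * M + i)) := by
    apply Summable.of_nonneg_of_le _ htail hgeo
    intro i
    unfold statPi
    positivity
  -- rewrite tsum over subtype
  have hre : (∑' k : {k : ℕ // 4 * M ≤ k}, statPi α lam k)
      = ∑' i : ℕ, statPi α lam (4 * M + i) :=
    (Equiv.tsum_eq
      (⟨fun i => ⟨4 * M + i, Nat.le_add_right _ _⟩, fun k => k.1 - 4 * M,
        fun i => by simp, fun k => Subtype.ext (Nat.add_sub_cancel' k.2)⟩ :
        ℕ ≃ {k : ℕ // 4 * M ≤ k})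
      (fun k : {k : ℕ // 4 * M ≤ k} => statPi α lam (k : ℕ))).symm
  rw [hre]
  have hstep : (∑' i : ℕ, statPi α lam (4 * M + i))
      ≤ ((b (4 * M)) ^ α / Zfun α lam) * 2 := by
    have := Summable.tsum_le_tsum htail hsumt hgeo
    calc (∑' i : ℕ, statPi α lam (4 * M + i))
        ≤ ∑' i : ℕ, ((b (4 * M)) ^ α / Zfun α lam) * (1/2:ℝ) ^ i := this
      _ = ((b (4 * M)) ^ α / Zfun α lam) * ∑' i : ℕ, (1/2:ℝ) ^ i := tsum_mul_left
      _ = ((b (4 * M)) ^ α / Zfun α lam) * 2 := by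
          rw [tsum_geometric_of_lt_one (by norm_num) (by norm_num)]
          norm_num
  refine le_trans hstep ?_
  -- final: (b 4M)^α / Z * 2 ≤ 2 * 2^(-(α M))
  have hb42 : b (4 * M) ≤ b (2 * M) * (1/2:ℝ) ^ M := by
    have h58 : ∀ k : ℕ, 2 * M ≤ k → x / ((k : ℝ) + 1) ≤ 5/8 := by
      intro k hk
      have hkr : (2:ℝ) * M ≤ (k:ℝ) := by exact_mod_cast hk
      rw [div_le_iff₀ (by positivity)]
      linarith
    have hb := aux_geom x (5/8) hxpos.le (by norm_num) (2 * M) h58 (2 * M)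
    have h4 : 4 * M = 2 * M + 2 * M := by ring
    rw [h4]
    calc b (2 * M + 2 * M) ≤ b (2 * M) * (5/8:ℝ) ^ (2 * M) := hb
      _ = b (2 * M) * ((25/64:ℝ)) ^ M := by rw [pow_mul]; norm_num
      _ ≤ b (2 * M) * (1/2:ℝ) ^ M := by
          apply mul_le_mul_of_nonneg_left _ (hbpos _).le
          exact pow_le_pow_left₀ (by norm_num) (by norm_num) M
  have hfin : (b (4 * M)) ^ α / Zfun α lam ≤ (2:ℝ) ^ (-(α * (M:ℝ))) := by
    have h1 : (b (4 * M)) ^ α ≤ (b (2 * M)) ^ α * (2:ℝ) ^ (-(α * (M:ℝ))) := by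
      calc (b (4 * M)) ^ α ≤ (b (2 * M) * (1/2:ℝ) ^ M) ^ α :=
            Real.rpow_le_rpow (hbpos _).le hb42 hαpos.le
        _ = (b (2 * M)) ^ α * ((1/2:ℝ) ^ M) ^ α :=
            Real.mul_rpow (hbpos _).le (by positivity)
        _ = (b (2 * M)) ^ α * (2:ℝ) ^ (-(α * (M:ℝ))) := by
            congr 1
            rw [← Real.rpow_natCast ((1:ℝ)/2) M, ← Real.rpow_mul (by norm_num),
              one_div, Real.inv_rpow (by norm_num), ← Real.rpow_neg (by norm_num)]
            ring_nf
    calc (b (4 * M)) ^ α / Zfun α lam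
        ≤ (b (4 * M)) ^ α / (b (2 * M)) ^ α := by
          apply div_le_div_of_nonneg_left (Real.rpow_nonneg (hbpos _).le _)
            (Real.rpow_pos_of_pos (hbpos _) _) hZ2
      _ ≤ ((b (2 * M)) ^ α * (2:ℝ) ^ (-(α * (M:ℝ)))) / (b (2 * M)) ^ α :=
          (div_le_div_iff_of_pos_right (Real.rpow_pos_of_pos (hbpos _) _)).mpr h1
      _ = (2:ℝ) ^ (-(α * (M:ℝ))) := by
          exact mul_div_cancel_left₀ _ (Real.rpow_pos_of_pos (hbpos _) _).ne'
  linarith [mul_le_mul_of_nonneg_right hfin (by norm_num : (0:ℝ) ≤ 2)]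
end

section
/- Let α ≥ 1 be real and θ, γ > 0. For ε > 0 set λ_ε = θ/(γ·ε^α). Then for every δ > 0: lim_{ε→0⁺} ∑_{k ∈ ℕ : |εk − (θ/γ)^{1/α}| > δ} π_{λ_ε}(k) = 0. -/
open scoped BigOperators

open Real Filter Set

private lemma tsum_exp_series (x : ℝ) :
    ∑' n : ℕ, x ^ n / (Nat.factorial n : ℝ) = Real.exp x := by
  rw [Real.exp_eq_exp_ℝ, NormedSpace.exp_eq_tsum_div]

private lemma summable_rpow_aux {ν α : ℝ} (hν : 0 < ν) (hα : 1 ≤ α) :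
    Summable (fun k : ℕ => (ν ^ k / (Nat.factorial k : ℝ)) ^ α) ∧
    ∑' k : ℕ, (ν ^ k / (Nat.factorial k : ℝ)) ^ α ≤ Real.exp (α * ν) := by
  set a : ℕ → ℝ := fun k => ν ^ k / (Nat.factorial k : ℝ) with ha
  have hapos : ∀ k, 0 < a k := fun k =>
    div_pos (pow_pos hν k) (by exact_mod_cast Nat.factorial_pos k)
  have hsa : Summable a := Real.summable_pow_div_factorial ν
  have hale : ∀ k, a k ≤ Real.exp ν := by
    intro k
    rw [← tsum_exp_series ν]
    exact Summable.le_tsum hsa k fun j _ => (hapos j).le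
  have key : ∀ k, (a k) ^ α ≤ Real.exp ν ^ (α - 1) * a k := by
    intro k
    have h1 : (a k) ^ α = (a k) ^ (α - 1) * a k := by
      rw [← Real.rpow_add_one (ne_of_gt (hapos k)) (α - 1), sub_add_cancel]
    rw [h1]
    exact mul_le_mul_of_nonneg_right
      (Real.rpow_le_rpow (hapos k).le (hale k) (by linarith)) (hapos k).le
  have hnn : ∀ k, 0 ≤ (a k) ^ α := fun k => Real.rpow_nonneg (hapos k).le α
  have hs2 : Summable (fun k => Real.exp ν ^ (α - 1) * a k) := hsa.mul_left _
  have hsum : Summable (fun k : ℕ => (a k) ^ α) :=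
    Summable.of_nonneg_of_le hnn key hs2
  refine ⟨hsum, ?_⟩
  calc ∑' k, (a k) ^ α ≤ ∑' k, Real.exp ν ^ (α - 1) * a k := Summable.tsum_le_tsum key hsum hs2
    _ = Real.exp ν ^ (α - 1) * Real.exp ν := by rw [tsum_mul_left, tsum_exp_series]
    _ = Real.exp (α * ν) := by
        rw [← Real.exp_mul]
        rw [← Real.exp_add]
        ring_nf

/-- `n! ≤ e · n · (n/e)^n` for `n ≥ 1`. -/
private lemma factorial_upper (n : ℕ) (hn : 1 ≤ n) :
    (Nat.factorial n : ℝ) ≤ Real.exp 1 * n * (n / Real.exp 1) ^ n := by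
  induction n with
  | zero => omega
  | succ m ih =>
    rcases Nat.eq_or_lt_of_le hn with h1 | h1
    · have hm0 : m = 0 := by omega
      subst hm0
      norm_num [Nat.factorial]
    · have hm : 1 ≤ m := by omega
      have ihm := ih hm
      have hmR : (1 : ℝ) ≤ (m : ℝ) := by exact_mod_cast hm
      have hmpos : (0 : ℝ) < m := by linarith
      have hepos := Real.exp_pos 1
      -- key: exp 1 * m^(m+1) ≤ (m+1)^(m+1)
      have hkey : Real.exp 1 * (m : ℝ) ^ (m + 1) ≤ ((m : ℝ) + 1) ^ (m + 1) := by
        have h2 : Real.exp ((m + 1 : ℕ) * ((m + 1 : ℝ))⁻¹) ≤ (((m : ℝ) + 1) / m) ^ (m + 1 : ℕ) := by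
          rw [Real.exp_nat_mul]
          apply pow_le_pow_left₀ (Real.exp_pos _).le
          · -- exp (1/(m+1)) ≤ (m+1)/m
            have h3 : (m : ℝ) / (m + 1) ≤ Real.exp (-(((m : ℝ) + 1))⁻¹) := by
              have := Real.add_one_le_exp (-(((m : ℝ) + 1))⁻¹)
              have h4 : (m : ℝ) / (m + 1) = -(((m : ℝ) + 1))⁻¹ + 1 := by
                field_simp
                ring
              linarith [h4 ▸ this]
            have h5 : Real.exp ((((m : ℝ) + 1))⁻¹) = (Real.exp (-(((m : ℝ) + 1))⁻¹))⁻¹ := by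
              rw [← Real.exp_neg]; ring_nf
            rw [h5]
            rw [inv_le_comm₀ (Real.exp_pos _) (by positivity)]
            calc ((((m : ℝ) + 1)) / m)⁻¹ = (m : ℝ) / (m + 1) := by
                  rw [inv_div]
              _ ≤ _ := h3
        have h6 : ((m + 1 : ℕ) : ℝ) * (((m : ℝ) + 1))⁻¹ = 1 := by
          push_cast; field_simp
        rw [h6] at h2
        have h7 : (((m : ℝ) + 1) / m) ^ (m + 1 : ℕ) * (m : ℝ) ^ (m + 1) = ((m : ℝ) + 1) ^ (m + 1) := by
          rw [div_pow, div_mul_cancel₀]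
          positivity
        calc Real.exp 1 * (m : ℝ) ^ (m + 1) ≤ (((m : ℝ) + 1) / m) ^ (m + 1 : ℕ) * (m : ℝ) ^ (m + 1) :=
              mul_le_mul_of_nonneg_right h2 (by positivity)
          _ = _ := h7
      have step : (Nat.factorial (m + 1) : ℝ) = ((m : ℝ) + 1) * (Nat.factorial m : ℝ) := by
        rw [Nat.factorial_succ]; push_cast; ring
      rw [step]
      calc ((m : ℝ) + 1) * (Nat.factorial m : ℝ)
          ≤ ((m : ℝ) + 1) * (Real.exp 1 * m * (m / Real.exp 1) ^ m) :=
            mul_le_mul_of_nonneg_left ihm (by positivity)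
        _ = ((m : ℝ) + 1) * (Real.exp 1 * (m : ℝ) ^ (m + 1) / Real.exp 1 ^ m) := by
            rw [div_pow, pow_succ]; ring
        _ ≤ ((m : ℝ) + 1) * (((m : ℝ) + 1) ^ (m + 1) / Real.exp 1 ^ m) := by
            apply mul_le_mul_of_nonneg_left _ (by positivity)
            apply div_le_div_of_nonneg_right hkey (by positivity) |>.trans_eq rfl
        _ = Real.exp 1 * ((m : ℝ) + 1) * (((m : ℝ) + 1) / Real.exp 1) ^ (m + 1) := by
            rw [div_pow, pow_succ (Real.exp 1) m]
            field_simp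
        _ = Real.exp 1 * ((m + 1 : ℕ) : ℝ) * (((m + 1 : ℕ) : ℝ) / Real.exp 1) ^ (m + 1) := by
            push_cast; ring

private lemma mode_lower {μ α : ℝ} (hμ : 1 ≤ μ) (hα : 1 ≤ α) :
    (Real.exp (μ - 3) / (μ + 1)) ^ α ≤ ∑' k : ℕ, (μ ^ k / (Nat.factorial k : ℝ)) ^ α := by
  have hμ0 : 0 < μ := by linarith
  set k0 : ℕ := ⌈μ⌉₊ with hk0def
  have hk0ge : (μ : ℝ) ≤ k0 := Nat.le_ceil μ
  have hk0le : (k0 : ℝ) ≤ μ + 1 := (Nat.ceil_lt_add_one hμ0.le).le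
  have hk01 : 1 ≤ k0 := by
    rw [hk0def]
    exact Nat.one_le_ceil_iff.mpr hμ0
  have hk0pos : (0 : ℝ) < k0 := by
    have : (1 : ℝ) ≤ (k0 : ℝ) := by exact_mod_cast hk01
    linarith
  have hepos := Real.exp_pos 1
  -- log bound : -2 ≤ k0 * log (μ / k0)
  have hlog : (-2 : ℝ) ≤ (k0 : ℝ) * Real.log (μ / k0) := by
    have hLdef : Real.log (μ / k0) = -Real.log ((k0 : ℝ) / μ) := by
      rw [Real.log_div hμ0.ne' hk0pos.ne', Real.log_div hk0pos.ne' hμ0.ne']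
      ring
    have hL1 : Real.log ((k0 : ℝ) / μ) ≤ (k0 : ℝ) / μ - 1 :=
      Real.log_le_sub_one_of_pos (div_pos hk0pos hμ0)
    have hL0 : 0 ≤ Real.log ((k0 : ℝ) / μ) :=
      Real.log_nonneg ((one_le_div hμ0).mpr hk0ge)
    rw [hLdef]
    have hd : (k0 : ℝ) / μ - 1 = ((k0 : ℝ) - μ) / μ := by field_simp
    rw [hd] at hL1
    have h1 : (k0 : ℝ) * Real.log ((k0 : ℝ) / μ) ≤ (k0 : ℝ) * (((k0 : ℝ) - μ) / μ) :=
      mul_le_mul_of_nonneg_left hL1 hk0pos.le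
    have h2 : (k0 : ℝ) * (((k0 : ℝ) - μ) / μ) ≤ 2 := by
      rw [← mul_div_assoc, div_le_iff₀ hμ0]
      nlinarith [mul_le_mul_of_nonneg_left (show (k0 : ℝ) - μ ≤ 1 by linarith) hk0pos.le]
    nlinarith
  have hexp2 : Real.exp (-2) ≤ (μ / k0) ^ k0 := by
    rw [← Real.exp_log (div_pos hμ0 hk0pos), ← Real.exp_nat_mul]
    exact Real.exp_le_exp.mpr hlog
  -- main inequality on the mode term
  have hfac := factorial_upper k0 hk01
  have hfacpos : (0 : ℝ) < (Nat.factorial k0 : ℝ) := by exact_mod_cast Nat.factorial_pos k0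
  have heq : μ ^ k0 / (Real.exp 1 * k0 * ((k0 : ℝ) / Real.exp 1) ^ k0)
      = (μ / k0) ^ k0 * Real.exp ((k0 : ℝ) - 1) / k0 := by
    have hne1 : (k0 : ℝ) ≠ 0 := hk0pos.ne'
    have hne2 : Real.exp 1 ≠ 0 := hepos.ne'
    rw [div_pow, div_pow, Real.exp_sub, ← Real.exp_one_pow]
    field_simp
  have hstep1 : Real.exp ((k0 : ℝ) - 3) / k0 ≤ μ ^ k0 / (Nat.factorial k0 : ℝ) := by
    have hb : μ ^ k0 / (Real.exp 1 * k0 * ((k0 : ℝ) / Real.exp 1) ^ k0)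
        ≤ μ ^ k0 / (Nat.factorial k0 : ℝ) :=
      div_le_div_of_nonneg_left (by positivity) hfacpos hfac
    refine le_trans ?_ (le_trans (le_of_eq heq.symm) hb)
    have h3 : Real.exp ((k0 : ℝ) - 3) = Real.exp (-2) * Real.exp ((k0 : ℝ) - 1) := by
      rw [← Real.exp_add]; ring_nf
    rw [h3]
    gcongr
  have hstep0 : Real.exp (μ - 3) / (μ + 1) ≤ Real.exp ((k0 : ℝ) - 3) / k0 :=
    div_le_div₀ (Real.exp_pos _).le (Real.exp_le_exp.mpr (by linarith)) hk0pos hk0le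
  have hq : Real.exp (μ - 3) / (μ + 1) ≤ μ ^ k0 / (Nat.factorial k0 : ℝ) :=
    hstep0.trans hstep1
  have hrp : (Real.exp (μ - 3) / (μ + 1)) ^ α ≤ (μ ^ k0 / (Nat.factorial k0 : ℝ)) ^ α :=
    Real.rpow_le_rpow (by positivity) hq (by linarith)
  refine hrp.trans (Summable.le_tsum (summable_rpow_aux hμ0 hα).1 k0 fun j _ => ?_)
  exact Real.rpow_nonneg (by positivity) α

private lemma tilt_eq {μ : ℝ} (s α : ℝ) (hμ : 0 < μ) (k : ℕ) :
    (μ ^ k / (Nat.factorial k : ℝ)) ^ α * Real.exp (α * s * k)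
      = ((μ * Real.exp s) ^ k / (Nat.factorial k : ℝ)) ^ α := by
  have hfpos : (0 : ℝ) < (Nat.factorial k : ℝ) := by exact_mod_cast Nat.factorial_pos k
  rw [mul_pow, ← Real.exp_nat_mul, mul_div_right_comm,
    Real.mul_rpow (by positivity) (Real.exp_pos _).le, ← Real.exp_mul]
  ring_nf

private lemma exp_upper_quad {x : ℝ} (h0 : 0 ≤ x) (h1 : x ≤ 1) :
    Real.exp x ≤ 1 + x + x ^ 2 := by
  have hb := Real.exp_bound' h0 h1 (n := 2) (by norm_num)
  simp [Finset.sum_range_succ, Nat.factorial] at hb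
  nlinarith [sq_nonneg x]

private lemma exp_neg_quad {x : ℝ} (h0 : 0 ≤ x) (h1 : x ≤ 1) :
    Real.exp (-x) ≤ 1 - x + (3 / 4) * x ^ 2 := by
  have habs : |(-x)| ≤ 1 := by rw [abs_neg, abs_of_nonneg h0]; exact h1
  have hb := Real.exp_bound habs (n := 2) (by norm_num)
  simp [Finset.sum_range_succ, Nat.factorial, abs_neg, abs_of_nonneg h0] at hb
  have := abs_sub_le_iff.mp hb
  nlinarith [this.1, this.2]

set_option maxHeartbeats 1000000 in
theorem stationary_distribution_concentration
    (α θ γ : ℝ) (hα : 1 ≤ α) (hθ : 0 < θ) (hγ : 0 < γ) (δ : ℝ) (hδ : 0 < δ) :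
    Filter.Tendsto
      (fun ε : ℝ =>
        ∑' k : {k : ℕ // δ < |ε * (k : ℝ) - (θ / γ) ^ (1 / α)|},
          statPi α (θ / (γ * ε ^ α)) k)
      (nhdsWithin 0 (Set.Ioi 0)) (nhds 0) := by
  have hγθ : 0 < θ / γ := div_pos hθ hγ
  have hα0 : (0 : ℝ) < α := by linarith
  set m : ℝ := (θ / γ) ^ (1 / α) with hmdef
  have hm : 0 < m := Real.rpow_pos_of_pos hγθ _
  set β : ℝ := min (δ / m) (1 / 2) with hβdef
  have hβpos : 0 < β := lt_min (div_pos hδ hm) (by norm_num)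
  have hβhalf : β ≤ 1 / 2 := min_le_right _ _
  have hβδ : β * m ≤ δ := by
    have h := min_le_left (δ / m) (1 / 2)
    calc β * m ≤ δ / m * m := mul_le_mul_of_nonneg_right h hm.le
      _ = δ := by field_simp
  set c : ℝ := β ^ 2 / 4 with hcdef
  have hcpos : 0 < c := by positivity
  set G : ℝ → ℝ := fun ε => 2 * ((m / ε + 1) * Real.exp (3 - m / ε * c)) ^ α with hGdef
  -- G tends to 0
  have hGtend : Filter.Tendsto G (nhdsWithin 0 (Set.Ioi 0)) (nhds 0) := by
    have hμtend : Filter.Tendsto (fun ε : ℝ => m / ε) (nhdsWithin 0 (Set.Ioi 0))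
        Filter.atTop := by
      simpa [div_eq_mul_inv] using tendsto_inv_nhdsGT_zero.const_mul_atTop hm
    have hc' : Filter.Tendsto (fun μ : ℝ => c * μ) Filter.atTop Filter.atTop :=
      Filter.Tendsto.const_mul_atTop hcpos Filter.tendsto_id
    have h1 : Filter.Tendsto (fun x : ℝ => x * Real.exp (-x)) Filter.atTop (nhds 0) := by
      simpa using tendsto_pow_mul_exp_neg_atTop_nhds_zero 1
    have h2 : Filter.Tendsto (fun μ : ℝ => c * μ * Real.exp (-(c * μ))) Filter.atTop
        (nhds 0) := h1.comp hc'
    have h3 : Filter.Tendsto (fun μ : ℝ => Real.exp (-(c * μ))) Filter.atTop (nhds 0) :=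
      Real.tendsto_exp_atBot.comp (tendsto_neg_atTop_atBot.comp hc')
    have hinner : Filter.Tendsto (fun μ : ℝ => (μ + 1) * Real.exp (3 - μ * c))
        Filter.atTop (nhds 0) := by
      have heq : (fun μ : ℝ => (μ + 1) * Real.exp (3 - μ * c))
          = fun μ : ℝ => Real.exp 3 * (1 / c * (c * μ * Real.exp (-(c * μ)))
              + Real.exp (-(c * μ))) := by
        funext μ
        rw [show (3 : ℝ) - μ * c = 3 + -(c * μ) by ring, Real.exp_add]
        field_simp
      rw [heq]
      simpa using (((h2.const_mul (1 / c)).add h3).const_mul (Real.exp 3))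
    have hcont : Filter.Tendsto (fun x : ℝ => x ^ α) (nhds (0 : ℝ)) (nhds 0) := by
      have := (Real.continuousAt_rpow_const 0 α (Or.inr hα0.le)).tendsto
      rwa [Real.zero_rpow hα0.ne'] at this
    have hF : Filter.Tendsto (fun μ : ℝ => 2 * ((μ + 1) * Real.exp (3 - μ * c)) ^ α)
        Filter.atTop (nhds 0) := by
      simpa using ((hcont.comp hinner).const_mul (2 : ℝ))
    exact hF.comp hμtend
  -- nonnegativity of the sums
  have hnonneg : ∀ᶠ ε in nhdsWithin (0 : ℝ) (Set.Ioi 0),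
      0 ≤ ∑' k : {k : ℕ // δ < |ε * (k : ℝ) - m|}, statPi α (θ / (γ * ε ^ α)) k := by
    filter_upwards [self_mem_nhdsWithin] with ε hε
    have hε0 : (0 : ℝ) < ε := hε
    have hεα : 0 < ε ^ α := Real.rpow_pos_of_pos hε0 α
    refine tsum_nonneg fun k => ?_
    have hZnn : 0 ≤ Zfun α (θ / (γ * ε ^ α)) := by
      unfold Zfun
      have h0 : 0 ≤ ∑' j : ℕ, (θ / (γ * ε ^ α)) ^ (j + 1)
          / ((Nat.factorial (j + 1) : ℝ)) ^ α :=
        tsum_nonneg fun j => by positivity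
      linarith
    unfold statPi
    exact div_nonneg (by positivity) hZnn
  -- main bound
  have hbound : ∀ᶠ ε in nhdsWithin (0 : ℝ) (Set.Ioi 0),
      (∑' k : {k : ℕ // δ < |ε * (k : ℝ) - m|}, statPi α (θ / (γ * ε ^ α)) k) ≤ G ε := by
    filter_upwards [Ioo_mem_nhdsGT hm] with ε hεIoo
    obtain ⟨hε0, hεm⟩ := hεIoo
    set μ : ℝ := m / ε with hμdef
    have hμ1 : 1 < μ := (one_lt_div hε0).mpr hεm
    have hμ0 : 0 < μ := by linarith
    have hεα : 0 < ε ^ α := Real.rpow_pos_of_pos hε0 α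
    have hlam : θ / (γ * ε ^ α) = μ ^ α := by
      rw [hμdef, Real.div_rpow hm.le hε0.le, hmdef, ← Real.rpow_mul hγθ.le,
        one_div_mul_cancel hα0.ne', Real.rpow_one, div_div]
    set p : ℕ → ℝ := fun k => (μ ^ k / (Nat.factorial k : ℝ)) ^ α with hpdef
    have hp : ∀ k : ℕ, (θ / (γ * ε ^ α)) ^ k / ((Nat.factorial k : ℝ)) ^ α = p k := by
      intro k
      rw [hlam, ← Real.rpow_natCast (μ ^ α) k, ← Real.rpow_mul hμ0.le,
        mul_comm α (k : ℝ), Real.rpow_mul hμ0.le, Real.rpow_natCast,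
        ← Real.div_rpow (by positivity) (by positivity)]
    have hsum_p : Summable p := (summable_rpow_aux hμ0 hα).1
    have hZeq : Zfun α (θ / (γ * ε ^ α)) = ∑' k, p k := by
      unfold Zfun
      rw [Summable.tsum_eq_zero_add hsum_p]
      have hp0 : p 0 = 1 := by
        simp only [hpdef, pow_zero, Nat.factorial_zero, Nat.cast_one, div_one, Real.one_rpow]
      rw [hp0]
      congr 1
      exact tsum_congr fun j => hp (j + 1)
    have hZl : (Real.exp (μ - 3) / (μ + 1)) ^ α ≤ Zfun α (θ / (γ * ε ^ α)) := by
      rw [hZeq]; exact mode_lower hμ1.le hα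
    have hZlpos : (0 : ℝ) < (Real.exp (μ - 3) / (μ + 1)) ^ α :=
      Real.rpow_pos_of_pos (by positivity) α
    have hZpos : 0 < Zfun α (θ / (γ * ε ^ α)) := lt_of_lt_of_le hZlpos hZl
    -- tilted functions
    set h₁ : ℕ → ℝ := fun k => p k * Real.exp (α * (β / 2) * ((k : ℝ) - μ * (1 + β)))
      with hh₁def
    set h₂ : ℕ → ℝ := fun k => p k * Real.exp (α * β * (μ * (1 - β) - (k : ℝ))) with hh₂def
    have hfun1 : h₁ = fun k => Real.exp (-(α * (β / 2) * (μ * (1 + β))))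
        * ((μ * Real.exp (β / 2)) ^ k / (Nat.factorial k : ℝ)) ^ α := by
      funext k
      simp only [hh₁def]
      rw [← tilt_eq (β / 2) α hμ0 k,
        show α * (β / 2) * ((k : ℝ) - μ * (1 + β))
          = α * (β / 2) * (k : ℝ) + -(α * (β / 2) * (μ * (1 + β))) from by ring,
        Real.exp_add]
      simp only [hpdef]
      ring
    have hfun2 : h₂ = fun k => Real.exp (α * β * (μ * (1 - β)))
        * ((μ * Real.exp (-β)) ^ k / (Nat.factorial k : ℝ)) ^ α := by
      funext k
      simp only [hh₂def]
      rw [← tilt_eq (-β) α hμ0 k,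
        show α * β * (μ * (1 - β) - (k : ℝ))
          = α * (-β) * (k : ℝ) + α * β * (μ * (1 - β)) from by ring,
        Real.exp_add]
      simp only [hpdef]
      ring
    have hν1 : 0 < μ * Real.exp (β / 2) := by positivity
    have hν2 : 0 < μ * Real.exp (-β) := by positivity
    have hs1 : Summable h₁ := by
      rw [hfun1]; exact ((summable_rpow_aux hν1 hα).1).mul_left _
    have hs2 : Summable h₂ := by
      rw [hfun2]; exact ((summable_rpow_aux hν2 hα).1).mul_left _
    -- tail sum bounds
    have hT1 : ∑' k, h₁ k ≤ Real.exp (α * (μ * (1 - c))) := by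
      rw [hfun1, tsum_mul_left]
      calc Real.exp (-(α * (β / 2) * (μ * (1 + β))))
          * ∑' k : ℕ, ((μ * Real.exp (β / 2)) ^ k / (Nat.factorial k : ℝ)) ^ α
          ≤ Real.exp (-(α * (β / 2) * (μ * (1 + β))))
            * Real.exp (α * (μ * Real.exp (β / 2))) :=
            mul_le_mul_of_nonneg_left (summable_rpow_aux hν1 hα).2 (Real.exp_pos _).le
        _ = Real.exp (α * (μ * Real.exp (β / 2)) + -(α * (β / 2) * (μ * (1 + β)))) := by
            rw [← Real.exp_add]; ring_nf
        _ ≤ Real.exp (α * (μ * (1 - c))) := by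
            apply Real.exp_le_exp.mpr
            have hq : Real.exp (β / 2) ≤ 1 + β / 2 + (β / 2) ^ 2 :=
              exp_upper_quad (by linarith) (by linarith)
            have hX : Real.exp (β / 2) - β / 2 * (1 + β) - 1 + c ≤ 0 := by
              rw [hcdef]; nlinarith [hq]
            linarith [mul_le_mul_of_nonneg_left hX (show (0 : ℝ) ≤ α * μ by positivity)]
    have hT2 : ∑' k, h₂ k ≤ Real.exp (α * (μ * (1 - c))) := by
      rw [hfun2, tsum_mul_left]
      calc Real.exp (α * β * (μ * (1 - β)))
          * ∑' k : ℕ, ((μ * Real.exp (-β)) ^ k / (Nat.factorial k : ℝ)) ^ α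
          ≤ Real.exp (α * β * (μ * (1 - β))) * Real.exp (α * (μ * Real.exp (-β))) :=
            mul_le_mul_of_nonneg_left (summable_rpow_aux hν2 hα).2 (Real.exp_pos _).le
        _ = Real.exp (α * (μ * Real.exp (-β)) + α * β * (μ * (1 - β))) := by
            rw [← Real.exp_add]; ring_nf
        _ ≤ Real.exp (α * (μ * (1 - c))) := by
            apply Real.exp_le_exp.mpr
            have hq : Real.exp (-β) ≤ 1 - β + (3 / 4) * β ^ 2 :=
              exp_neg_quad hβpos.le (by linarith)
            have hX : Real.exp (-β) + β * (1 - β) - 1 + c ≤ 0 := by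
              rw [hcdef]; nlinarith [hq]
            linarith [mul_le_mul_of_nonneg_left hX (show (0 : ℝ) ≤ α * μ by positivity)]
    -- pointwise bound
    have hstat_eq : statPi α (θ / (γ * ε ^ α)) = fun k => p k / Zfun α (θ / (γ * ε ^ α)) := by
      funext k; unfold statPi; rw [hp k]
    have hpt : ∀ k : ℕ, Set.indicator {k : ℕ | δ < |ε * (k : ℝ) - m|}
        (statPi α (θ / (γ * ε ^ α))) k
        ≤ (h₁ k + h₂ k) / Zfun α (θ / (γ * ε ^ α)) := by
      intro k
      have hpk : 0 ≤ p k := by simp only [hpdef]; positivity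
      have hh1 : 0 ≤ h₁ k := mul_nonneg hpk (Real.exp_pos _).le
      have hh2 : 0 ≤ h₂ k := mul_nonneg hpk (Real.exp_pos _).le
      by_cases hk : k ∈ {k : ℕ | δ < |ε * (k : ℝ) - m|}
      · rw [Set.indicator_of_mem hk, hstat_eq]
        have hdich : μ * (1 + β) < (k : ℝ) ∨ (k : ℝ) < μ * (1 - β) := by
          have hk' : δ < |ε * (k : ℝ) - m| := hk
          rcases lt_abs.mp hk' with h | h
          · left
            rw [hμdef, div_mul_eq_mul_div, div_lt_iff₀ hε0]
            nlinarith [h, hβδ]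
          · right
            rw [hμdef, div_mul_eq_mul_div, lt_div_iff₀ hε0]
            nlinarith [h, hβδ]
        have hnum : p k ≤ h₁ k + h₂ k := by
          rcases hdich with hup | hlo
          · have hone : (1 : ℝ) ≤ Real.exp (α * (β / 2) * ((k : ℝ) - μ * (1 + β))) := by
              have harg : 0 ≤ α * (β / 2) * ((k : ℝ) - μ * (1 + β)) :=
                mul_nonneg (by positivity) (by linarith)
              linarith [Real.add_one_le_exp (α * (β / 2) * ((k : ℝ) - μ * (1 + β)))]
            have : p k ≤ h₁ k := by
              calc p k = p k * 1 := (mul_one _).symm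
                _ ≤ h₁ k := mul_le_mul_of_nonneg_left hone hpk
            linarith
          · have hone : (1 : ℝ) ≤ Real.exp (α * β * (μ * (1 - β) - (k : ℝ))) := by
              have harg : 0 ≤ α * β * (μ * (1 - β) - (k : ℝ)) :=
                mul_nonneg (by positivity) (by linarith)
              linarith [Real.add_one_le_exp (α * β * (μ * (1 - β) - (k : ℝ)))]
            have : p k ≤ h₂ k := by
              calc p k = p k * 1 := (mul_one _).symm
                _ ≤ h₂ k := mul_le_mul_of_nonneg_left hone hpk
            linarith
        exact (div_le_div_iff_of_pos_right hZpos).mpr hnum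
      · rw [Set.indicator_of_notMem hk]
        exact div_nonneg (by linarith) hZpos.le
    have hsum_stat : Summable (statPi α (θ / (γ * ε ^ α))) := by
      rw [hstat_eq]; exact hsum_p.div_const _
    have hsum_ind : Summable (Set.indicator {k : ℕ | δ < |ε * (k : ℝ) - m|}
        (statPi α (θ / (γ * ε ^ α)))) := hsum_stat.indicator _
    have hsum_rhs : Summable (fun k => (h₁ k + h₂ k) / Zfun α (θ / (γ * ε ^ α))) :=
      (hs1.add hs2).div_const _
    have hμ1pos : (0 : ℝ) < μ + 1 := by linarith
    show (∑' k : {k : ℕ // δ < |ε * (k : ℝ) - m|}, statPi α (θ / (γ * ε ^ α)) k)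
      ≤ 2 * ((m / ε + 1) * Real.exp (3 - m / ε * c)) ^ α
    calc (∑' k : {k : ℕ // δ < |ε * (k : ℝ) - m|}, statPi α (θ / (γ * ε ^ α)) k)
        = ∑' k : ℕ, Set.indicator {k : ℕ | δ < |ε * (k : ℝ) - m|}
            (statPi α (θ / (γ * ε ^ α))) k := tsum_subtype _ _
      _ ≤ ∑' k : ℕ, (h₁ k + h₂ k) / Zfun α (θ / (γ * ε ^ α)) :=
          Summable.tsum_le_tsum hpt hsum_ind hsum_rhs
      _ = ((∑' k, h₁ k) + ∑' k, h₂ k) / Zfun α (θ / (γ * ε ^ α)) := by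
          rw [tsum_div_const, Summable.tsum_add hs1 hs2]
      _ ≤ (Real.exp (α * (μ * (1 - c))) + Real.exp (α * (μ * (1 - c))))
            / Zfun α (θ / (γ * ε ^ α)) :=
          (div_le_div_iff_of_pos_right hZpos).mpr (add_le_add hT1 hT2)
      _ = 2 * Real.exp (α * (μ * (1 - c))) / Zfun α (θ / (γ * ε ^ α)) := by ring_nf
      _ ≤ 2 * Real.exp (α * (μ * (1 - c))) / ((Real.exp (μ - 3) / (μ + 1)) ^ α) :=
          div_le_div_of_nonneg_left (by positivity) hZlpos hZl
      _ = 2 * ((m / ε + 1) * Real.exp (3 - m / ε * c)) ^ α := by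
          rw [← hμdef, Real.div_rpow (Real.exp_pos _).le hμ1pos.le,
            Real.mul_rpow hμ1pos.le (Real.exp_pos _).le, ← Real.exp_mul, ← Real.exp_mul]
          have hsplit : Real.exp (α * (μ * (1 - c)))
              = Real.exp ((μ - 3) * α) * Real.exp ((3 - μ * c) * α) := by
            rw [← Real.exp_add]; congr 1; ring
          have hne1 : Real.exp ((μ - 3) * α) ≠ 0 := Real.exp_ne_zero _
          have hne2 : (μ + 1 : ℝ) ^ α ≠ 0 := (Real.rpow_pos_of_pos hμ1pos α).ne'
          rw [hsplit]
          field_simp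
  exact squeeze_zero' hnonneg hbound hGtend
end

section
/- Let α ≥ 1 be real and θ, γ > 0. For ε > 0 set λ_ε = θ/(γ·ε^α). Then for every bounded continuous function f : ℝ → ℝ: lim_{ε→0⁺} ∑_{k=0}^∞ π_{λ_ε}(k)·f(εk) = f((θ/γ)^{1/α}). -/
open scoped BigOperators

noncomputable def Afun (α lam : ℝ) (k : ℕ) : ℝ := lam ^ k / ((Nat.factorial k : ℝ)) ^ α

lemma fact_rpow_pos (α : ℝ) (k : ℕ) : 0 < ((Nat.factorial k : ℝ)) ^ α :=
  Real.rpow_pos_of_pos (by exact_mod_cast Nat.factorial_pos k) α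

lemma Afun_pos (α lam : ℝ) (hlam : 0 < lam) (k : ℕ) : 0 < Afun α lam k :=
  div_pos (pow_pos hlam k) (fact_rpow_pos α k)

lemma Afun_summable (α lam : ℝ) (hα : 1 ≤ α) (hlam : 0 < lam) : Summable (Afun α lam) := by
  refine Summable.of_nonneg_of_le (fun k => (Afun_pos α lam hlam k).le) ?_
    (Real.summable_pow_div_factorial lam)
  intro k
  have h1 : (1:ℝ) ≤ (Nat.factorial k : ℝ) := by exact_mod_cast Nat.one_le_iff_ne_zero.mpr (Nat.factorial_pos k).ne'
  have h2 : ((Nat.factorial k : ℝ)) ^ (1:ℝ) ≤ ((Nat.factorial k : ℝ)) ^ α :=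
    Real.rpow_le_rpow_of_exponent_le h1 hα
  rw [Real.rpow_one] at h2
  exact div_le_div_of_nonneg_left (pow_pos hlam k).le (by exact_mod_cast Nat.factorial_pos k) h2

lemma Zfun_eq (α lam : ℝ) (hα : 1 ≤ α) (hlam : 0 < lam) :
    Zfun α lam = ∑' k, Afun α lam k := by
  rw [Zfun, Summable.tsum_eq_zero_add (Afun_summable α lam hα hlam)]
  simp [Afun, Real.one_rpow]

lemma Zfun_pos (α lam : ℝ) (hlam : 0 < lam) : 0 < Zfun α lam := by
  have : 0 ≤ ∑' j : ℕ, lam ^ (j + 1) / ((Nat.factorial (j + 1) : ℝ)) ^ α :=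
    tsum_nonneg fun j => by positivity
  rw [Zfun]; linarith

lemma Afun_le_Zfun (α lam : ℝ) (hα : 1 ≤ α) (hlam : 0 < lam) (k : ℕ) :
    Afun α lam k ≤ Zfun α lam := by
  rw [Zfun_eq α lam hα hlam]
  exact Summable.le_tsum (Afun_summable α lam hα hlam) k (fun j _ => (Afun_pos α lam hlam j).le)

lemma statPi_eq (α lam : ℝ) (k : ℕ) : statPi α lam k = Afun α lam k / Zfun α lam := rfl

lemma statPi_nonneg (α lam : ℝ) (hα : 1 ≤ α) (hlam : 0 < lam) (k : ℕ) : 0 ≤ statPi α lam k := by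
  rw [statPi_eq]
  exact div_nonneg (Afun_pos α lam hlam k).le (Zfun_pos α lam hlam).le

lemma statPi_summable (α lam : ℝ) (hα : 1 ≤ α) (hlam : 0 < lam) : Summable (statPi α lam) := by
  have := (Afun_summable α lam hα hlam).div_const (Zfun α lam)
  exact this

lemma tsum_statPi (α lam : ℝ) (hα : 1 ≤ α) (hlam : 0 < lam) : ∑' k, statPi α lam k = 1 := by
  have h := Zfun_pos α lam hlam
  simp only [statPi_eq]
  rw [tsum_div_const, ← Zfun_eq α lam hα hlam, div_self h.ne']

lemma fact_succ_rpow (α : ℝ) (k : ℕ) :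
    ((Nat.factorial (k+1) : ℝ)) ^ α = (((k:ℝ)+1)) ^ α * ((Nat.factorial k : ℝ)) ^ α := by
  rw [Nat.factorial_succ, Nat.cast_mul, Real.mul_rpow (by positivity) (by positivity)]
  push_cast; ring_nf

/-- step down: if `lam ≤ q * (k+1)^α` then `A (k+1) ≤ q * A k`. -/
lemma Afun_step_le (α lam q : ℝ) (hlam : 0 < lam) (k : ℕ)
    (h : lam ≤ q * (((k:ℝ)+1)) ^ α) : Afun α lam (k+1) ≤ q * Afun α lam k := by
  have hc : (0:ℝ) < (((k:ℝ)+1)) ^ α := Real.rpow_pos_of_pos (by positivity) α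
  have hF : (0:ℝ) < ((Nat.factorial k : ℝ)) ^ α := fact_rpow_pos α k
  have hA : 0 < Afun α lam k := Afun_pos α lam hlam k
  have key : Afun α lam (k+1) = Afun α lam k * lam / (((k:ℝ)+1)) ^ α := by
    unfold Afun
    rw [fact_succ_rpow, pow_succ]
    field_simp
  rw [key, div_le_iff₀ hc]
  calc Afun α lam k * lam ≤ Afun α lam k * (q * (((k:ℝ)+1)) ^ α) :=
        mul_le_mul_of_nonneg_left h hA.le
  _ = q * Afun α lam k * (((k:ℝ)+1)) ^ α := by ring

/-- step up: if `(k+1)^α ≤ q * lam` then `A k ≤ q * A (k+1)`. -/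
lemma Afun_step_ge (α lam q : ℝ) (hlam : 0 < lam) (hq : 0 ≤ q) (k : ℕ)
    (h : (((k:ℝ)+1)) ^ α ≤ q * lam) : Afun α lam k ≤ q * Afun α lam (k+1) := by
  have hc : (0:ℝ) < (((k:ℝ)+1)) ^ α := Real.rpow_pos_of_pos (by positivity) α
  have hA1 : 0 < Afun α lam (k+1) := Afun_pos α lam hlam (k+1)
  have key : Afun α lam k = Afun α lam (k+1) * (((k:ℝ)+1)) ^ α / lam := by
    unfold Afun
    rw [fact_succ_rpow, pow_succ]
    field_simp
  rw [key, div_le_iff₀ hlam]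
  calc Afun α lam (k+1) * (((k:ℝ)+1)) ^ α ≤ Afun α lam (k+1) * (q * lam) :=
        mul_le_mul_of_nonneg_left h hA1.le
  _ = q * Afun α lam (k+1) * lam := by ring

lemma chain_down (u : ℕ → ℝ) (q : ℝ) (hq : 0 ≤ q) (K : ℕ)
    (h : ∀ j, K ≤ j → u (j+1) ≤ q * u j) :
    ∀ l, K ≤ l → u l ≤ q ^ (l - K) * u K := by
  intro l hl
  induction l, hl using Nat.le_induction with
  | base => simp
  | succ n hn ih =>
    have h2 : n + 1 - K = (n - K) + 1 := by omega
    rw [h2]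
    calc u (n+1) ≤ q * u n := h n hn
    _ ≤ q * (q ^ (n-K) * u K) := mul_le_mul_of_nonneg_left ih hq
    _ = q ^ ((n-K)+1) * u K := by ring

lemma chain_up_aux (u : ℕ → ℝ) (q : ℝ) (hq : 0 ≤ q) (L : ℕ)
    (h : ∀ j, j < L → u j ≤ q * u (j+1)) :
    ∀ d k, k + d = L → u k ≤ q ^ d * u L := by
  intro d
  induction d with
  | zero => intro k hk; subst hk; simp
  | succ n ih =>
    intro k hk
    calc u k ≤ q * u (k+1) := h k (by omega)
    _ ≤ q * (q ^ n * u L) := mul_le_mul_of_nonneg_left (ih (k+1) (by omega)) hq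
    _ = q ^ (n+1) * u L := by ring

lemma chain_up (u : ℕ → ℝ) (q : ℝ) (hq : 0 ≤ q) (L : ℕ)
    (h : ∀ j, j < L → u j ≤ q * u (j+1)) :
    ∀ k, k ≤ L → u k ≤ q ^ (L - k) * u L := fun k hk =>
  chain_up_aux u q hq L h (L - k) k (by omega)

set_option maxHeartbeats 1000000 in
lemma key_estimate (α x₀ δ ε c M : ℝ) (N : ℕ) (f : ℝ → ℝ)
    (hα : 1 ≤ α) (hx : 0 < x₀) (hδ : 0 < δ) (hδx : δ < x₀) (hε : 0 < ε)
    (hM : ∀ x, |f x| ≤ M) (hc : 0 ≤ c)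
    (hmid : ∀ x, |x - x₀| < δ → |f x - f x₀| ≤ c)
    (hN : (N:ℝ) + 1 ≤ δ/(2*ε)) :
    |(∑' k : ℕ, statPi α ((x₀/ε)^α) k * f (ε*k)) - f x₀| ≤
      c + 2*M*(((x₀/(x₀+δ/2))^α)^N * (1-(x₀/(x₀+δ/2))^α)⁻¹)
        + 2*M*((((x₀-δ/2)/x₀)^α)^N * (1-((x₀-δ/2)/x₀)^α)⁻¹) := by
  have hα0 : (0:ℝ) < α := lt_of_lt_of_le one_pos hα
  set lam : ℝ := (x₀/ε)^α with hlamdef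
  have hlam : 0 < lam := Real.rpow_pos_of_pos (div_pos hx hε) α
  set q : ℝ := (x₀/(x₀+δ/2))^α with hqdef
  set q' : ℝ := ((x₀-δ/2)/x₀)^α with hq'def
  have hx2 : 0 < x₀ - δ/2 := by linarith
  have hxd2 : 0 < x₀ + δ/2 := by linarith
  have hq0 : 0 < q := Real.rpow_pos_of_pos (div_pos hx hxd2) α
  have hq1 : q < 1 := Real.rpow_lt_one (div_pos hx hxd2).le ((div_lt_one hxd2).mpr (by linarith)) hα0
  have hq'0 : 0 < q' := Real.rpow_pos_of_pos (div_pos hx2 hx) α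
  have hq'1 : q' < 1 := Real.rpow_lt_one (div_pos hx2 hx).le ((div_lt_one hx).mpr (by linarith)) hα0
  have hM0 : 0 ≤ M := le_trans (abs_nonneg (f 0)) (hM 0)
  set K : ℕ := ⌈(x₀+δ/2)/ε⌉₊ with hKdef
  set m : ℕ := ⌈x₀/ε⌉₊ with hmdef
  set m' : ℕ := ⌊x₀/ε⌋₊ with hm'def
  set L : ℕ := ⌊(x₀-δ/2)/ε⌋₊ with hLdef
  set Km : ℕ := ⌊(x₀-δ)/ε⌋₊ with hKmdef
  have hZpos : 0 < Zfun α lam := Zfun_pos α lam hlam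
  have hAZ : ∀ k, Afun α lam k ≤ Zfun α lam := Afun_le_Zfun α lam hα hlam
  have hApos : ∀ k, 0 < Afun α lam k := Afun_pos α lam hlam
  -- ratio step hypotheses
  have hR : ∀ j, K ≤ j → Afun α lam (j+1) ≤ q * Afun α lam j := by
    intro j hj
    apply Afun_step_le α lam q hlam
    have hj1 : (x₀+δ/2)/ε ≤ (j:ℝ)+1 := by
      have := Nat.le_ceil ((x₀+δ/2)/ε)
      have hjr : (K:ℝ) ≤ (j:ℝ) := by exact_mod_cast hj
      linarith
    rw [hqdef, hlamdef, ← Real.mul_rpow (div_pos hx hxd2).le (by positivity)]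
    apply Real.rpow_le_rpow (div_pos hx hε).le ?_ hα0.le
    rw [div_le_iff₀ hε] at hj1 ⊢
    rw [div_mul_eq_mul_div, div_mul_eq_mul_div, le_div_iff₀ hxd2]
    nlinarith
  have hR1 : ∀ j, m ≤ j → Afun α lam (j+1) ≤ 1 * Afun α lam j := by
    intro j hj
    apply Afun_step_le α lam 1 hlam
    rw [one_mul, hlamdef]
    apply Real.rpow_le_rpow (div_pos hx hε).le ?_ hα0.le
    have := Nat.le_ceil (x₀/ε)
    have hjr : (m:ℝ) ≤ (j:ℝ) := by exact_mod_cast hj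
    linarith
  have hL : ∀ j, j < L → Afun α lam j ≤ q' * Afun α lam (j+1) := by
    intro j hj
    apply Afun_step_ge α lam q' hlam hq'0.le
    have hj1 : (j:ℝ)+1 ≤ (x₀-δ/2)/ε := by
      have h2 : (j:ℝ)+1 ≤ (L:ℝ) := by exact_mod_cast hj
      have := Nat.floor_le (show (0:ℝ) ≤ (x₀-δ/2)/ε by positivity)
      linarith
    rw [hq'def, hlamdef, ← Real.mul_rpow (div_pos hx2 hx).le (by positivity)]
    apply Real.rpow_le_rpow (by positivity) ?_ hα0.le
    have heq : (x₀-δ/2)/x₀ * (x₀/ε) = (x₀-δ/2)/ε := by field_simp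
    rw [heq]
    exact hj1
  have hL1 : ∀ j, j < m' → Afun α lam j ≤ 1 * Afun α lam (j+1) := by
    intro j hj
    apply Afun_step_ge α lam 1 hlam zero_le_one
    rw [one_mul, hlamdef]
    apply Real.rpow_le_rpow (by positivity) ?_ hα0.le
    have h2 : (j:ℝ)+1 ≤ (m':ℝ) := by exact_mod_cast hj
    have := Nat.floor_le (show (0:ℝ) ≤ x₀/ε by positivity)
    linarith
  have hmK : m ≤ K := Nat.ceil_le_ceil (by gcongr; linarith)
  have hLm' : L ≤ m' := Nat.floor_le_floor (by gcongr; linarith)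
  -- right/left pointwise bounds on statPi
  have rightPi : ∀ k : ℕ, x₀ + δ ≤ ε*k → statPi α lam k ≤ q^(k-K) := by
    intro k hk
    have hKk : K ≤ k := by
      rw [hKdef]
      apply Nat.ceil_le.mpr
      rw [div_le_iff₀ hε]
      nlinarith [hk]
    have h1 : Afun α lam k ≤ q^(k-K) * Afun α lam K := chain_down _ q hq0.le K hR k hKk
    have h2 : Afun α lam K ≤ 1^(K-m) * Afun α lam m := chain_down _ 1 zero_le_one m hR1 K hmK
    rw [one_pow, one_mul] at h2
    rw [statPi_eq, div_le_iff₀ hZpos]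
    calc Afun α lam k ≤ q^(k-K) * Afun α lam K := h1
      _ ≤ q^(k-K) * Afun α lam m := by
          exact mul_le_mul_of_nonneg_left h2 (by positivity)
      _ ≤ q^(k-K) * Zfun α lam := mul_le_mul_of_nonneg_left (hAZ m) (by positivity)
  have rightIdx : ∀ k : ℕ, x₀ + δ ≤ ε*k → K + N ≤ k := by
    intro k hk
    have h1 : (K:ℝ) < (x₀+δ/2)/ε + 1 := Nat.ceil_lt_add_one (by positivity)
    have h2 : (N:ℝ) ≤ δ/(2*ε) - 1 := by linarith
    have h3 : (x₀+δ)/ε ≤ (k:ℝ) := by rw [div_le_iff₀ hε]; nlinarith [hk]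
    have h4 : ((K + N : ℕ):ℝ) ≤ (k:ℝ) := by
      have : (x₀+δ/2)/ε + δ/(2*ε) = (x₀+δ)/ε := by field_simp; ring
      push_cast; linarith
    exact Nat.cast_le.mp h4
  have leftPi : ∀ k : ℕ, ε*k ≤ x₀ - δ → statPi α lam k ≤ q'^(L-k) := by
    intro k hk
    have hkL : k ≤ L := by
      rw [hLdef]
      apply Nat.le_floor
      rw [le_div_iff₀ hε]
      nlinarith [hk]
    have h1 : Afun α lam k ≤ q'^(L-k) * Afun α lam L := chain_up _ q' hq'0.le L hL k hkL
    have h2 : Afun α lam L ≤ 1^(m'-L) * Afun α lam m' := chain_up _ 1 zero_le_one m' hL1 L hLm'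
    rw [one_pow, one_mul] at h2
    rw [statPi_eq, div_le_iff₀ hZpos]
    calc Afun α lam k ≤ q'^(L-k) * Afun α lam L := h1
      _ ≤ q'^(L-k) * Afun α lam m' := mul_le_mul_of_nonneg_left h2 (by positivity)
      _ ≤ q'^(L-k) * Zfun α lam := mul_le_mul_of_nonneg_left (hAZ m') (by positivity)
  have leftIdx : ∀ k : ℕ, ε*k ≤ x₀ - δ → k ≤ Km ∧ N + (Km - k) ≤ L - k := by
    intro k hk
    have hkKm : k ≤ Km := by
      rw [hKmdef]; apply Nat.le_floor; rw [le_div_iff₀ hε]; nlinarith [hk]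
    have hKmN : Km + N ≤ L := by
      have h1 : (Km:ℝ) ≤ (x₀-δ)/ε := Nat.floor_le (le_of_lt (div_pos (by linarith) hε))
      have h2 : (N:ℝ) ≤ δ/(2*ε) - 1 := by linarith
      have h3 : (x₀-δ/2)/ε - 1 < (L:ℝ) := Nat.sub_one_lt_floor _
      have h4 : ((Km + N : ℕ):ℝ) < (L:ℝ) := by
        have : (x₀-δ)/ε + δ/(2*ε) = (x₀-δ/2)/ε := by field_simp; ring
        push_cast; linarith
      exact (Nat.cast_lt.mp h4).le
    exact ⟨hkKm, by omega⟩
  -- summability and basic facts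
  have hπs : Summable (statPi α lam) := statPi_summable α lam hα hlam
  have hπ1 : ∑' k, statPi α lam k = 1 := tsum_statPi α lam hα hlam
  have hπ0 : ∀ k, 0 ≤ statPi α lam k := statPi_nonneg α lam hα hlam
  have hg1 : Summable (fun k : ℕ => statPi α lam k * f (ε*(k:ℝ))) := by
    apply Summable.of_abs
    apply Summable.of_nonneg_of_le (fun k => abs_nonneg _) ?_ (hπs.mul_right M)
    intro k
    rw [abs_mul, abs_of_nonneg (hπ0 k)]
    exact mul_le_mul_of_nonneg_left (hM _) (hπ0 k)
  have hg2 : Summable (fun k : ℕ => statPi α lam k * f x₀) := hπs.mul_right _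
  have hgsum : Summable (fun k : ℕ => statPi α lam k * (f (ε*(k:ℝ)) - f x₀)) := by
    simpa [mul_sub] using hg1.sub hg2
  have hdiff : (∑' k : ℕ, statPi α lam k * f (ε*(k:ℝ))) - f x₀
      = ∑' k : ℕ, statPi α lam k * (f (ε*(k:ℝ)) - f x₀) := by
    have hc2 : ∀ k:ℕ, statPi α lam k * (f (ε*(k:ℝ)) - f x₀)
        = statPi α lam k * f (ε*(k:ℝ)) - statPi α lam k * f x₀ := fun k => mul_sub _ _ _
    rw [eq_comm, tsum_congr hc2, Summable.tsum_sub hg1 hg2, tsum_mul_right, hπ1, one_mul]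
  set B₁ : ℕ → ℝ := fun k => if x₀ + δ ≤ ε*(k:ℝ) then q^(k-K) else 0 with hB₁
  set B₂ : ℕ → ℝ := fun k => if ε*(k:ℝ) ≤ x₀ - δ then q'^(L-k) else 0 with hB₂
  have hB₁nn : ∀ k, 0 ≤ B₁ k := by
    intro k; simp only [hB₁]; split_ifs <;> positivity
  have hB₂nn : ∀ k, 0 ≤ B₂ k := by
    intro k; simp only [hB₂]; split_ifs <;> positivity
  have hterm : ∀ k : ℕ, |statPi α lam k * (f (ε*(k:ℝ)) - f x₀)|
      ≤ c * statPi α lam k + 2*M*B₁ k + 2*M*B₂ k := by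
    intro k
    have hnn1 : 0 ≤ c * statPi α lam k := mul_nonneg hc (hπ0 k)
    have hnn2 : 0 ≤ 2*M*B₁ k := mul_nonneg (by positivity) (hB₁nn k)
    have hnn3 : 0 ≤ 2*M*B₂ k := mul_nonneg (by positivity) (hB₂nn k)
    rw [abs_mul, abs_of_nonneg (hπ0 k)]
    have h2M : |f (ε*(k:ℝ)) - f x₀| ≤ 2*M := by
      calc |f (ε*(k:ℝ)) - f x₀| ≤ |f (ε*(k:ℝ))| + |f x₀| := abs_sub _ _
      _ ≤ M + M := add_le_add (hM _) (hM _)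
      _ = 2*M := by ring
    rcases le_or_gt (x₀+δ) (ε*(k:ℝ)) with h | h
    · have h3 : B₁ k = q^(k-K) := by simp only [hB₁]; rw [if_pos h]
      have : statPi α lam k * |f (ε*(k:ℝ)) - f x₀| ≤ q^(k-K) * (2*M) :=
        mul_le_mul (rightPi k h) h2M (abs_nonneg _) (by positivity)
      rw [h3] at hnn2 ⊢
      linarith
    · rcases le_or_gt (ε*(k:ℝ)) (x₀-δ) with h' | h'
      · have h3 : B₂ k = q'^(L-k) := by simp only [hB₂]; rw [if_pos h']
        have : statPi α lam k * |f (ε*(k:ℝ)) - f x₀| ≤ q'^(L-k) * (2*M) :=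
          mul_le_mul (leftPi k h') h2M (abs_nonneg _) (by positivity)
        rw [h3] at hnn3 ⊢
        linarith
      · have hmidk : |f (ε*(k:ℝ)) - f x₀| ≤ c := hmid _ (abs_lt.mpr ⟨by linarith, by linarith⟩)
        have : statPi α lam k * |f (ε*(k:ℝ)) - f x₀| ≤ statPi α lam k * c :=
          mul_le_mul_of_nonneg_left hmidk (hπ0 k)
        linarith [this]
  have hsgeo : Summable (fun k : ℕ => q^(k-K)) := by
    apply (summable_nat_add_iff K).mp
    simpa [Nat.add_sub_cancel] using summable_geometric_of_lt_one hq0.le hq1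
  have hsB₁ : Summable B₁ := by
    apply Summable.of_nonneg_of_le hB₁nn ?_ hsgeo
    intro k; simp only [hB₁]; split_ifs
    · exact le_refl _
    · positivity
  have hB₂zero : ∀ k : ℕ, k ∉ Finset.range (Km+1) → B₂ k = 0 := by
    intro k hk
    simp only [hB₂]
    rw [if_neg]
    intro hcon
    have := (leftIdx k hcon).1
    simp only [Finset.mem_range] at hk
    omega
  have hsB₂ : Summable B₂ := summable_of_ne_finset_zero hB₂zero
  have htB₁ : ∑' k, B₁ k ≤ q^N * (1-q)⁻¹ := by
    set C : ℕ → ℝ := fun k => if K+N ≤ k then q^(k-K) else 0 with hC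
    have hCnn : ∀ k, 0 ≤ C k := by
      intro k; simp only [hC]; split_ifs <;> positivity
    have hsC : Summable C := by
      apply Summable.of_nonneg_of_le hCnn ?_ hsgeo
      intro k; simp only [hC]; split_ifs
      · exact le_refl _
      · positivity
    have h1 : ∀ k, B₁ k ≤ C k := by
      intro k; simp only [hB₁, hC]
      by_cases hcond : x₀ + δ ≤ ε*(k:ℝ)
      · rw [if_pos hcond, if_pos (rightIdx k hcond)]
      · rw [if_neg hcond]; exact hCnn k
    have h2 : ∑' k, C k = q^N * (1-q)⁻¹ := by
      have h3 := hsC.sum_add_tsum_nat_add (K+N)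
      have h4 : ∑ i ∈ Finset.range (K+N), C i = 0 := by
        apply Finset.sum_eq_zero
        intro i hi
        simp only [hC]
        rw [if_neg]
        simp only [Finset.mem_range] at hi
        omega
      have h5 : ∀ i : ℕ, C (i + (K+N)) = q^N * q^i := by
        intro i
        simp only [hC]
        rw [if_pos (by omega)]
        have he : i + (K+N) - K = N + i := by omega
        rw [he, pow_add]
      rw [← h3, h4, zero_add, tsum_congr h5, tsum_mul_left,
        tsum_geometric_of_lt_one hq0.le hq1]
    calc ∑' k, B₁ k ≤ ∑' k, C k := Summable.tsum_le_tsum h1 hsB₁ hsC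
      _ = q^N * (1-q)⁻¹ := h2
  have htB₂ : ∑' k, B₂ k ≤ q'^N * (1-q')⁻¹ := by
    rw [tsum_eq_sum hB₂zero]
    have h1 : ∀ k ∈ Finset.range (Km+1), B₂ k ≤ q'^N * q'^(Km-k) := by
      intro k _
      simp only [hB₂]
      split_ifs with hcond
      · obtain ⟨h2, h3⟩ := leftIdx k hcond
        rw [← pow_add]
        exact pow_le_pow_of_le_one hq'0.le hq'1.le h3
      · positivity
    calc ∑ k ∈ Finset.range (Km+1), B₂ k
        ≤ ∑ k ∈ Finset.range (Km+1), q'^N * q'^(Km-k) := Finset.sum_le_sum h1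
      _ = q'^N * ∑ k ∈ Finset.range (Km+1), q'^(Km-k) := by rw [Finset.mul_sum]
      _ = q'^N * ∑ k ∈ Finset.range (Km+1), q'^k := by
          congr 1
          have := Finset.sum_range_reflect (fun j => q'^j) (Km+1)
          simpa using this
      _ ≤ q'^N * (1-q')⁻¹ := by
          apply mul_le_mul_of_nonneg_left ?_ (by positivity)
          rw [← tsum_geometric_of_lt_one hq'0.le hq'1]
          exact Summable.sum_le_tsum _ (fun i _ => by positivity)
            (summable_geometric_of_lt_one hq'0.le hq'1)
  -- final assembly
  rw [hdiff]
  have hmaj : Summable (fun k : ℕ => c * statPi α lam k + 2*M*B₁ k + 2*M*B₂ k) :=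
    ((hπs.mul_left c).add (hsB₁.mul_left (2*M))).add (hsB₂.mul_left (2*M))
  calc |∑' k : ℕ, statPi α lam k * (f (ε*(k:ℝ)) - f x₀)|
      ≤ ∑' k : ℕ, |statPi α lam k * (f (ε*(k:ℝ)) - f x₀)| := by
        have habs : Summable fun k : ℕ => ‖statPi α lam k * (f (ε*(k:ℝ)) - f x₀)‖ := by
          simp only [Real.norm_eq_abs]; exact hgsum.abs
        have := norm_tsum_le_tsum_norm habs
        simp only [Real.norm_eq_abs] at this
        exact this
    _ ≤ ∑' k : ℕ, (c * statPi α lam k + 2*M*B₁ k + 2*M*B₂ k) :=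
        Summable.tsum_le_tsum hterm hgsum.abs hmaj
    _ = c * (∑' k, statPi α lam k) + 2*M*(∑' k, B₁ k) + 2*M*(∑' k, B₂ k) := by
        rw [Summable.tsum_add ((hπs.mul_left c).add (hsB₁.mul_left (2*M))) (hsB₂.mul_left (2*M)),
          Summable.tsum_add (hπs.mul_left c) (hsB₁.mul_left (2*M)),
          tsum_mul_left, tsum_mul_left, tsum_mul_left]
    _ ≤ c + 2*M*(q^N * (1-q)⁻¹) + 2*M*(q'^N * (1-q')⁻¹) := by
        rw [hπ1, mul_one]
        have t1 : 2*M*(∑' k, B₁ k) ≤ 2*M*(q^N * (1-q)⁻¹) :=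
          mul_le_mul_of_nonneg_left htB₁ (by positivity)
        have t2 : 2*M*(∑' k, B₂ k) ≤ 2*M*(q'^N * (1-q')⁻¹) :=
          mul_le_mul_of_nonneg_left htB₂ (by positivity)
        linarith

theorem stationary_distribution_weak_convergence
    (α θ γ : ℝ) (hα : 1 ≤ α) (hθ : 0 < θ) (hγ : 0 < γ)
    (f : ℝ → ℝ) (hf : Continuous f) (hbd : ∃ M : ℝ, ∀ x : ℝ, |f x| ≤ M) :
    Filter.Tendsto
      (fun ε : ℝ => ∑' k : ℕ, statPi α (θ / (γ * ε ^ α)) k * f (ε * (k : ℝ)))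
      (nhdsWithin 0 (Set.Ioi 0)) (nhds (f ((θ / γ) ^ (1 / α)))) := by
  obtain ⟨M, hM⟩ := hbd
  have hM0 : 0 ≤ M := le_trans (abs_nonneg (f 0)) (hM 0)
  have hα0 : (0:ℝ) < α := lt_of_lt_of_le one_pos hα
  set x₀ : ℝ := (θ/γ)^(1/α) with hx₀def
  have hx : 0 < x₀ := Real.rpow_pos_of_pos (div_pos hθ hγ) _
  rw [Metric.tendsto_nhdsWithin_nhds]
  intro η hη
  obtain ⟨δ₀, hδ₀, hcont⟩ := Metric.continuous_iff.mp hf x₀ (η/2) (by linarith)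
  set δ := min (δ₀/2) (x₀/2) with hδdef
  have hδpos : 0 < δ := lt_min (by linarith) (by linarith)
  have hδx : δ < x₀ := lt_of_le_of_lt (min_le_right _ _) (by linarith)
  have hmid : ∀ x, |x - x₀| < δ → |f x - f x₀| ≤ η/2 := by
    intro x hx'
    have hd : dist x x₀ < δ₀ := by
      rw [Real.dist_eq]
      calc |x - x₀| < δ := hx'
        _ ≤ δ₀/2 := min_le_left _ _
        _ < δ₀ := by linarith
    have := hcont x hd
    rw [Real.dist_eq] at this
    exact this.le
  set q : ℝ := (x₀/(x₀+δ/2))^α with hqdef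
  set q' : ℝ := ((x₀-δ/2)/x₀)^α with hq'def
  have hx2 : 0 < x₀ - δ/2 := by linarith
  have hxd2 : 0 < x₀ + δ/2 := by linarith
  have hq0 : 0 < q := Real.rpow_pos_of_pos (div_pos hx hxd2) α
  have hq1 : q < 1 := Real.rpow_lt_one (div_pos hx hxd2).le ((div_lt_one hxd2).mpr (by linarith)) hα0
  have hq'0 : 0 < q' := Real.rpow_pos_of_pos (div_pos hx2 hx) α
  have hq'1 : q' < 1 := Real.rpow_lt_one (div_pos hx2 hx).le ((div_lt_one hx).mpr (by linarith)) hα0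
  obtain ⟨n₁, hn₁⟩ := exists_pow_lt_of_lt_one
    (show (0:ℝ) < (η/4)*(1-q)/(2*M+1) from
      div_pos (mul_pos (by linarith) (by linarith)) (by linarith)) hq1
  obtain ⟨n₂, hn₂⟩ := exists_pow_lt_of_lt_one
    (show (0:ℝ) < (η/4)*(1-q')/(2*M+1) from
      div_pos (mul_pos (by linarith) (by linarith)) (by linarith)) hq'1
  set n₀ : ℕ := max n₁ n₂ with hn₀def
  refine ⟨δ/(2*((n₀:ℝ)+2)), by positivity, ?_⟩
  intro ε hεmem hεd
  have hε : 0 < ε := Set.mem_Ioi.mp hεmem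
  rw [Real.dist_eq, sub_zero, abs_of_pos hε] at hεd
  have hNcond : (n₀:ℝ) + 1 ≤ δ/(2*ε) := by
    rw [le_div_iff₀ (by positivity)]
    have h2 : ε * (2*((n₀:ℝ)+2)) < δ := (lt_div_iff₀ (by positivity)).mp hεd
    nlinarith
  have hlameq : θ/(γ*ε^α) = (x₀/ε)^α := by
    rw [Real.div_rpow hx.le hε.le]
    have hx₀α : x₀^α = θ/γ := by
      rw [hx₀def, ← Real.rpow_mul (le_of_lt (div_pos hθ hγ)), one_div,
        inv_mul_cancel₀ hα0.ne', Real.rpow_one]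
    rw [hx₀α, div_div]
  rw [Real.dist_eq, hlameq]
  have hkey := key_estimate α x₀ δ ε (η/2) M n₀ f hα hx hδpos hδx hε hM (by linarith) hmid hNcond
  rw [← hqdef, ← hq'def] at hkey
  -- numeric bounds
  have hIq : (0:ℝ) < (1-q)⁻¹ := inv_pos.mpr (by linarith)
  have hIq' : (0:ℝ) < (1-q')⁻¹ := inv_pos.mpr (by linarith)
  have hb1 : 2*M*(q^n₀*(1-q)⁻¹) < η/4 := by
    have e1 : q^n₀ ≤ q^n₁ := pow_le_pow_of_le_one hq0.le hq1.le (le_max_left _ _)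
    have step1 : q^n₀ * (1-q)⁻¹ ≤ q^n₁ * (1-q)⁻¹ := mul_le_mul_of_nonneg_right e1 hIq.le
    have step2 : q^n₁ * (1-q)⁻¹ < ((η/4)*(1-q)/(2*M+1)) * (1-q)⁻¹ :=
      mul_lt_mul_of_pos_right hn₁ hIq
    have step3 : ((η/4)*(1-q)/(2*M+1)) * (1-q)⁻¹ = (η/4)/(2*M+1) := by
      have hne : (1:ℝ) - q ≠ 0 := ne_of_gt (by linarith)
      have hr : ((η/4)*(1-q)/(2*M+1)) * (1-q)⁻¹ = (η/4)*((1-q)*(1-q)⁻¹)/(2*M+1) := by ring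
      rw [hr, mul_inv_cancel₀ hne, mul_one]
    have big : q^n₀ * (1-q)⁻¹ < (η/4)/(2*M+1) := lt_of_le_of_lt step1 (step3 ▸ step2)
    calc 2*M*(q^n₀*(1-q)⁻¹) ≤ (2*M+1)*(q^n₀*(1-q)⁻¹) := by
          apply mul_le_mul_of_nonneg_right (by linarith) (by positivity)
      _ < (2*M+1)*((η/4)/(2*M+1)) := by
          exact mul_lt_mul_of_pos_left big (by linarith)
      _ = η/4 := by
          rw [eq_div_iff (by positivity : (2*M+1:ℝ) ≠ 0)] at *
          field_simp
  have hb2 : 2*M*(q'^n₀*(1-q')⁻¹) < η/4 := by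
    have e1 : q'^n₀ ≤ q'^n₂ := pow_le_pow_of_le_one hq'0.le hq'1.le (le_max_right _ _)
    have step1 : q'^n₀ * (1-q')⁻¹ ≤ q'^n₂ * (1-q')⁻¹ := mul_le_mul_of_nonneg_right e1 hIq'.le
    have step2 : q'^n₂ * (1-q')⁻¹ < ((η/4)*(1-q')/(2*M+1)) * (1-q')⁻¹ :=
      mul_lt_mul_of_pos_right hn₂ hIq'
    have step3 : ((η/4)*(1-q')/(2*M+1)) * (1-q')⁻¹ = (η/4)/(2*M+1) := by
      have hne : (1:ℝ) - q' ≠ 0 := ne_of_gt (by linarith)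
      have hr : ((η/4)*(1-q')/(2*M+1)) * (1-q')⁻¹ = (η/4)*((1-q')*(1-q')⁻¹)/(2*M+1) := by ring
      rw [hr, mul_inv_cancel₀ hne, mul_one]
    have big : q'^n₀ * (1-q')⁻¹ < (η/4)/(2*M+1) := lt_of_le_of_lt step1 (step3 ▸ step2)
    calc 2*M*(q'^n₀*(1-q')⁻¹) ≤ (2*M+1)*(q'^n₀*(1-q')⁻¹) := by
          apply mul_le_mul_of_nonneg_right (by linarith) (by positivity)
      _ < (2*M+1)*((η/4)/(2*M+1)) := by
          exact mul_lt_mul_of_pos_left big (by linarith)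
      _ = η/4 := by
          rw [eq_div_iff (by positivity : (2*M+1:ℝ) ≠ 0)] at *
          field_simp
  linarith
end

section
/- Let α ≥ 1 be real and θ, γ > 0, and let f : ℝ → ℝ be twice continuously differentiable with compact support. For ε > 0 define L_ε f : [0,∞) → ℝ by L_ε f(z) = (γ·z^α/ε)·(f(z−ε) − f(z)) + (θ/ε)·(f(z+ε) − f(z)). Then lim_{ε→0⁺} sup_{z ≥ 0} |L_ε f(z) − (θ − γ·z^α)·f′(z)| = 0. -/
open scoped BigOperators

/-- Generator of the rescaled number-of-colonies process:
`L_ε f(z) = (γ z^α/ε)(f(z-ε) - f z) + (θ/ε)(f(z+ε) - f z)`, with `z^α` the real power. -/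
noncomputable def genL (α θ γ ε : ℝ) (f : ℝ → ℝ) (z : ℝ) : ℝ :=
  (γ * z ^ α / ε) * (f (z - ε) - f z) + (θ / ε) * (f (z + ε) - f z)

/-- First-order Taylor bound from a global bound on the second derivative. -/
lemma taylor1_bound (f : ℝ → ℝ) (hd1 : Differentiable ℝ (deriv f))
    (hd : Differentiable ℝ f)
    (M : ℝ) (hM : ∀ x, |deriv (deriv f) x| ≤ M) (z h : ℝ) :
    |f (z + h) - f z - h * deriv f z| ≤ M * h ^ 2 := by
  -- deriv f is M-Lipschitz
  have hlip : ∀ x y : ℝ, |deriv f x - deriv f y| ≤ M * |x - y| := by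
    intro x y
    have := Convex.norm_image_sub_le_of_norm_deriv_le
      (f := deriv f) (s := Set.univ) (fun a _ => hd1 a) (fun a _ => hM a)
      convex_univ (Set.mem_univ y) (Set.mem_univ x)
    simpa [Real.norm_eq_abs] using this
  set g : ℝ → ℝ := fun x => f x - x * deriv f z with hg
  have hgd : ∀ x, HasDerivAt g (deriv f x - deriv f z) x := by
    intro x
    have := ((hd x).hasDerivAt).sub ((hasDerivAt_id x).mul_const (deriv f z))
    simp only [one_mul] at this; exact this
  have hmem : z ∈ Set.uIcc z (z + h) := Set.left_mem_uIcc
  have hmem' : z + h ∈ Set.uIcc z (z + h) := Set.right_mem_uIcc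
  have key := Convex.norm_image_sub_le_of_norm_hasDerivWithin_le
    (f := g) (f' := fun x => deriv f x - deriv f z) (s := Set.uIcc z (z + h))
    (C := M * |h|)
    (fun x _ => (hgd x).hasDerivWithinAt)
    (fun x hx => by
      have h1 : |deriv f x - deriv f z| ≤ M * |x - z| := hlip x z
      have h2 : |x - z| ≤ |h| := by
        rcases Set.mem_uIcc.mp hx with ⟨h3, h4⟩ | ⟨h3, h4⟩
        · rw [abs_of_nonneg (by linarith), abs_of_nonneg (by linarith)]; linarith
        · rw [abs_of_nonpos (by linarith), abs_of_nonpos (by linarith)]; linarith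
      have hM0 : 0 ≤ M := le_trans (abs_nonneg _) (hM z)
      calc ‖deriv f x - deriv f z‖ = |deriv f x - deriv f z| := rfl
        _ ≤ M * |x - z| := h1
        _ ≤ M * |h| := by nlinarith)
    (convex_uIcc _ _) hmem hmem'
  have hcalc : g (z + h) - g z = f (z + h) - f z - h * deriv f z := by
    simp only [hg]; ring
  calc |f (z + h) - f z - h * deriv f z| = ‖g (z + h) - g z‖ := by rw [hcalc]; rfl
    _ ≤ M * |h| * ‖z + h - z‖ := key
    _ = M * h ^ 2 := by
        simp only [add_sub_cancel_left, Real.norm_eq_abs]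
        rw [mul_assoc, ← abs_mul]
        rw [show h * h = h ^ 2 by ring, abs_of_nonneg (sq_nonneg h)]

theorem generator_convergence
    (α θ γ : ℝ) (hα : 1 ≤ α) (hθ : 0 < θ) (hγ : 0 < γ)
    (f : ℝ → ℝ) (hf : ContDiff ℝ 2 f) (hsupp : HasCompactSupport f) :
    Filter.Tendsto
      (fun ε : ℝ =>
        ⨆ z : Set.Ici (0 : ℝ),
          |genL α θ γ ε f z - (θ - γ * (z : ℝ) ^ α) * deriv f z|)
      (nhdsWithin 0 (Set.Ioi 0)) (nhds 0) := by
  -- regularity facts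
  have hf1 : ContDiff ℝ 1 (deriv f) := by
    have := ContDiff.iterate_deriv' 1 1 (f := f) (by exact_mod_cast hf)
    simpa using this
  obtain ⟨hd1, hc2⟩ := contDiff_one_iff_deriv.mp hf1
  have hd : Differentiable ℝ f := hf.differentiable (by norm_num)
  -- bound on the second derivative
  obtain ⟨M, hM⟩ := (hsupp.deriv.deriv).exists_bound_of_continuous hc2
  have hM' : ∀ x, |deriv (deriv f) x| ≤ M := fun x => hM x
  have hM0 : 0 ≤ M := le_trans (abs_nonneg _) (hM' 0)
  -- radius of support
  obtain ⟨R, hR0, hRs⟩ :=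
    (hsupp.isBounded).subset_closedBall_lt 0 0
  have hzero : ∀ x : ℝ, R < |x| → f x = 0 := by
    intro x hx
    have : x ∉ tsupport f := fun h => by
      have := hRs h
      simp only [Metric.mem_closedBall, Real.dist_eq, sub_zero] at this
      linarith
    exact image_eq_zero_of_notMem_tsupport this
  have hzero' : ∀ x : ℝ, R < |x| → deriv f x = 0 := by
    intro x hx
    have : x ∉ tsupport f := fun h => by
      have := hRs h
      simp only [Metric.mem_closedBall, Real.dist_eq, sub_zero] at this
      linarith
    exact Function.notMem_support.mp (fun h => this (support_deriv_subset h))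
  set K : ℝ := (γ * (R + 1) ^ α + θ) * M with hK
  have hRα0 : 0 ≤ (R + 1 : ℝ) ^ α := Real.rpow_nonneg (by linarith) α
  have hK0 : 0 ≤ K := by
    apply mul_nonneg _ hM0
    positivity
  -- the pointwise estimate
  have main : ∀ ε : ℝ, ε ∈ Set.Ioo (0:ℝ) 1 → ∀ z : ℝ, 0 ≤ z →
      |genL α θ γ ε f z - (θ - γ * z ^ α) * deriv f z| ≤ K * ε := by
    intro ε ⟨hε0, hε1⟩ z hz
    by_cases hzR : z ≤ R + 1
    · have hεne : ε ≠ 0 := ne_of_gt hε0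
      have hzα0 : 0 ≤ z ^ α := Real.rpow_nonneg hz α
      have hzα : z ^ α ≤ (R + 1) ^ α := Real.rpow_le_rpow hz hzR (by linarith)
      have hT1 : |f (z - ε) - f z + ε * deriv f z| ≤ M * ε ^ 2 := by
        have := taylor1_bound f hd1 hd M hM' z (-ε)
        have e : f (z + -ε) - f z - (-ε) * deriv f z = f (z - ε) - f z + ε * deriv f z := by
          ring_nf
        rw [e] at this
        simpa using this
      have hT2 : |f (z + ε) - f z - ε * deriv f z| ≤ M * ε ^ 2 :=
        taylor1_bound f hd1 hd M hM' z ε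
      have hsplit : genL α θ γ ε f z - (θ - γ * z ^ α) * deriv f z =
          (γ * z ^ α / ε) * (f (z - ε) - f z + ε * deriv f z)
          + (θ / ε) * (f (z + ε) - f z - ε * deriv f z) := by
        unfold genL
        field_simp
        ring
      rw [hsplit]
      have h1 : |(γ * z ^ α / ε) * (f (z - ε) - f z + ε * deriv f z)| ≤
          (γ * z ^ α / ε) * (M * ε ^ 2) := by
        rw [abs_mul, abs_of_nonneg (by positivity : (0:ℝ) ≤ γ * z ^ α / ε)]
        exact mul_le_mul_of_nonneg_left hT1 (by positivity)
      have h2 : |(θ / ε) * (f (z + ε) - f z - ε * deriv f z)| ≤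
          (θ / ε) * (M * ε ^ 2) := by
        rw [abs_mul, abs_of_nonneg (by positivity : (0:ℝ) ≤ θ / ε)]
        exact mul_le_mul_of_nonneg_left hT2 (by positivity)
      have e1 : (γ * z ^ α / ε) * (M * ε ^ 2) = γ * z ^ α * M * ε := by
        field_simp
      have e2 : (θ / ε) * (M * ε ^ 2) = θ * M * ε := by
        field_simp
      calc |(γ * z ^ α / ε) * (f (z - ε) - f z + ε * deriv f z)
            + (θ / ε) * (f (z + ε) - f z - ε * deriv f z)|
          ≤ |(γ * z ^ α / ε) * (f (z - ε) - f z + ε * deriv f z)|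
            + |(θ / ε) * (f (z + ε) - f z - ε * deriv f z)| := abs_add_le _ _
        _ ≤ (γ * z ^ α / ε) * (M * ε ^ 2) + (θ / ε) * (M * ε ^ 2) := add_le_add h1 h2
        _ = γ * z ^ α * M * ε + θ * M * ε := by rw [e1, e2]
        _ ≤ K * ε := by
            rw [hK, show (γ * (R + 1) ^ α + θ) * M * ε
              = γ * (R + 1) ^ α * M * ε + θ * M * ε by ring]
            gcongr
    · push_neg at hzR
      have hz1 : R < |z - ε| := by rw [abs_of_nonneg (by linarith)]; linarith
      have hz2 : R < |z| := by rw [abs_of_nonneg hz]; linarith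
      have hz3 : R < |z + ε| := by rw [abs_of_nonneg (by linarith)]; linarith
      have : genL α θ γ ε f z - (θ - γ * z ^ α) * deriv f z = 0 := by
        unfold genL
        rw [hzero _ hz1, hzero _ hz2, hzero _ hz3, hzero' _ hz2]
        ring
      rw [this, abs_zero]
      positivity
  -- squeeze
  haveI : Nonempty (Set.Ici (0:ℝ)) := ⟨⟨0, Set.mem_Ici.mpr le_rfl⟩⟩
  have hmem : ∀ᶠ ε in nhdsWithin (0:ℝ) (Set.Ioi 0), ε ∈ Set.Ioo (0:ℝ) 1 := by
    have h1 : ∀ᶠ ε in nhdsWithin (0:ℝ) (Set.Ioi 0), ε ∈ Set.Ioi (0:ℝ) :=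
      eventually_mem_nhdsWithin
    have h2 : ∀ᶠ ε in nhdsWithin (0:ℝ) (Set.Ioi 0), ε < 1 := by
      apply Filter.Eventually.filter_mono nhdsWithin_le_nhds
      exact Filter.Tendsto.eventually_lt_const (by norm_num) Filter.tendsto_id
    filter_upwards [h1, h2] with ε hε1 hε2
    exact ⟨hε1, hε2⟩
  apply squeeze_zero'
  · filter_upwards with ε
    exact Real.iSup_nonneg (fun z => abs_nonneg _)
  · filter_upwards [hmem] with ε hε
    exact Real.iSup_le (fun z => main ε hε z z.2) (mul_nonneg hK0 hε.1.le)
  · have : Filter.Tendsto (fun ε : ℝ => K * ε) (nhdsWithin 0 (Set.Ioi 0)) (nhds (K * 0)) :=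
      (Filter.tendsto_id.const_mul K).mono_left nhdsWithin_le_nhds
    simpa using this
end

section
/- Let n ≥ 1 be an integer, q > 0 and t ≥ 0. Set r₀ = (q + e^{−(1+q)t})/(1+q) and r₁ = q(1 − e^{−(1+q)t})/(1+q) (both lie in [0,1]). For x ∈ {0,…,n} define the probability mass function μ_x on {0,…,n} by μ_x(j) = ∑_{a=0}^{min(x,j)} C(x,a)·r₀^a·(1−r₀)^{x−a}·C(n−x, j−a)·r₁^{j−a}·(1−r₁)^{(n−x)−(j−a)} (terms with j−a > n−x being zero). Then for all x, y ∈ {0,…,n}: ∑_{j=0}^n |μ_x(j) − μ_y(j)| ≤ 2n·e^{−(1+q)t}. -/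
open scoped BigOperators

open Finset in
/-- Binomial probability mass function. -/
noncomputable def binP (m : ℕ) (p : ℝ) (k : ℕ) : ℝ :=
  (Nat.choose m k : ℝ) * p ^ k * (1 - p) ^ (m - k)

lemma binP_nonneg {p : ℝ} (h0 : 0 ≤ p) (h1 : p ≤ 1) (m k : ℕ) : 0 ≤ binP m p k := by
  unfold binP
  have : (0:ℝ) ≤ 1 - p := by linarith
  positivity

lemma binP_eq_zero {m k : ℕ} (h : m < k) (p : ℝ) : binP m p k = 0 := by
  unfold binP
  simp [Nat.choose_eq_zero_of_lt h]

lemma sum_binP (m : ℕ) (p : ℝ) : ∑ k ∈ Finset.range (m+1), binP m p k = 1 := by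
  rw [show (1:ℝ) = (p + (1-p))^m by ring_nf, add_pow]
  exact Finset.sum_congr rfl fun k _ => by unfold binP; ring

lemma sum_binP_le {p : ℝ} (h0 : 0 ≤ p) (h1 : p ≤ 1) (m M : ℕ) :
    ∑ k ∈ Finset.range M, binP m p k ≤ 1 := by
  have hsub : Finset.range M ⊆ Finset.range (max M (m+1)) :=
    Finset.range_subset_range.2 (le_max_left _ _)
  have h2 : ∑ k ∈ Finset.range M, binP m p k ≤ ∑ k ∈ Finset.range (max M (m+1)), binP m p k :=
    Finset.sum_le_sum_of_subset_of_nonneg hsub (fun k _ _ => binP_nonneg h0 h1 m k)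
  have h3 : ∑ k ∈ Finset.range (max M (m+1)), binP m p k = 1 := by
    rw [← sum_binP m p]
    symm
    apply Finset.sum_subset (Finset.range_subset_range.2 (le_max_right _ _))
    intro k _ hk
    simp only [Finset.mem_range, not_lt] at hk
    exact binP_eq_zero (by omega) p
  linarith

lemma binP_succ (m : ℕ) (p : ℝ) (k : ℕ) :
    binP (m+1) p k = (if k = 0 then 0 else p * binP m p (k-1)) + (1-p) * binP m p k := by
  cases k with
  | zero =>
    simp only [binP, if_pos, Nat.choose_zero_right, Nat.cast_one, pow_zero, Nat.sub_zero]
    ring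
  | succ k =>
    simp only [if_neg (Nat.succ_ne_zero k), Nat.succ_sub_one]
    unfold binP
    rcases lt_trichotomy k m with h | h | h
    · have h1 : m + 1 - (k+1) = m - k := by omega
      have h2 : m - k = (m - (k+1)) + 1 := by omega
      rw [Nat.choose_succ_succ, h1, h2]
      push_cast
      ring
    · subst h
      simp [Nat.choose_self, Nat.choose_succ_self, Nat.sub_self]
      ring
    · have h1 : (m+1).choose (k+1) = 0 := Nat.choose_eq_zero_of_lt (by omega)
      have h2 : m.choose k = 0 := Nat.choose_eq_zero_of_lt (by omega)
      have h3 : m.choose (k+1) = 0 := Nat.choose_eq_zero_of_lt (by omega)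
      simp [h1, h2, h3]

lemma tri_swap (f : ℕ → ℕ → ℝ) (N : ℕ) :
    ∑ j ∈ Finset.range N, ∑ a ∈ Finset.range (j+1), f a (j-a)
      = ∑ a ∈ Finset.range N, ∑ k ∈ Finset.range (N-a), f a k := by
  induction N with
  | zero => simp
  | succ N ih =>
    rw [Finset.sum_range_succ, ih,
      Finset.sum_range_succ (fun a => ∑ k ∈ Finset.range (N+1-a), f a k),
      Finset.sum_range_succ (fun a => f a (N - a))]
    have hinner : ∀ a ∈ Finset.range N,
        ∑ k ∈ Finset.range (N+1-a), f a k = (∑ k ∈ Finset.range (N-a), f a k) + f a (N-a) := by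
      intro a ha
      simp only [Finset.mem_range] at ha
      rw [show N+1-a = (N-a)+1 by omega, Finset.sum_range_succ]
    rw [Finset.sum_congr rfl hinner, Finset.sum_add_distrib]
    rw [show N + 1 - N = 1 by omega]
    simp only [Nat.sub_self, Finset.range_one, Finset.sum_singleton]
    ring

/-- Law at time `t` of the number of chains in state 0 among `n` independent two-state
chains, `x` of which start in state 0: a convolution of two binomials with success
probabilities `r0 = P₀₀(t)` and `r1 = P₁₀(t)`. -/
noncomputable def muPMF (n x : ℕ) (r0 r1 : ℝ) (j : ℕ) : ℝ :=
  ∑ a ∈ Finset.range (min x j + 1),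
    (Nat.choose x a : ℝ) * r0 ^ a * (1 - r0) ^ (x - a) *
      (Nat.choose (n - x) (j - a) : ℝ) * r1 ^ (j - a) * (1 - r1) ^ ((n - x) - (j - a))

lemma mu_eq (n x : ℕ) (r0 r1 : ℝ) (j : ℕ) :
    muPMF n x r0 r1 j = ∑ a ∈ Finset.range (j+1), binP x r0 a * binP (n-x) r1 (j-a) := by
  have hterm : ∀ a : ℕ,
      (Nat.choose x a : ℝ) * r0 ^ a * (1 - r0) ^ (x - a) *
        (Nat.choose (n - x) (j - a) : ℝ) * r1 ^ (j - a) * (1 - r1) ^ ((n - x) - (j - a))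
      = binP x r0 a * binP (n-x) r1 (j-a) := by
    intro a; unfold binP; ring
  unfold muPMF
  simp_rw [hterm]
  apply Finset.sum_subset (Finset.range_subset_range.2 (by omega))
  intro a ha hna
  simp only [Finset.mem_range] at ha hna
  have : x < a := by omega
  unfold binP
  simp [Nat.choose_eq_zero_of_lt this]

lemma mu_nonneg {r0 r1 : ℝ} (h00 : 0 ≤ r0) (h01 : r0 ≤ 1) (h10 : 0 ≤ r1) (h11 : r1 ≤ 1)
    (n x j : ℕ) : 0 ≤ muPMF n x r0 r1 j := by
  rw [mu_eq]
  exact Finset.sum_nonneg fun a _ =>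
    mul_nonneg (binP_nonneg h00 h01 _ _) (binP_nonneg h10 h11 _ _)

lemma sum_mu_le {r0 r1 : ℝ} (h00 : 0 ≤ r0) (h01 : r0 ≤ 1) (h10 : 0 ≤ r1) (h11 : r1 ≤ 1)
    (m x N : ℕ) : ∑ j ∈ Finset.range N, muPMF m x r0 r1 j ≤ 1 := by
  simp_rw [mu_eq]
  rw [tri_swap (fun a k => binP x r0 a * binP (m-x) r1 k) N]
  calc ∑ a ∈ Finset.range N, ∑ k ∈ Finset.range (N-a), binP x r0 a * binP (m-x) r1 k
      = ∑ a ∈ Finset.range N, binP x r0 a * ∑ k ∈ Finset.range (N-a), binP (m-x) r1 k := by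
        simp_rw [Finset.mul_sum]
    _ ≤ ∑ a ∈ Finset.range N, binP x r0 a * 1 := by
        apply Finset.sum_le_sum
        intro a _
        exact mul_le_mul_of_nonneg_left (sum_binP_le h10 h11 _ _) (binP_nonneg h00 h01 _ _)
    _ ≤ 1 := by simpa using sum_binP_le h00 h01 x N

lemma mu_step (n x : ℕ) (hx : x + 1 ≤ n) (r0 r1 : ℝ) (j : ℕ) :
    muPMF n (x+1) r0 r1 j - muPMF n x r0 r1 j
      = (r0 - r1) * ((if j = 0 then 0 else muPMF (n-1) x r0 r1 (j-1))
          - muPMF (n-1) x r0 r1 j) := by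
  set m2 := n - 1 - x with hm2
  have hA : n - (x+1) = m2 := by omega
  have hC : n - 1 - x = m2 := rfl
  set ν : ℕ → ℝ := fun k => ∑ a ∈ Finset.range (k+1), binP x r0 a * binP m2 r1 (k-a) with hν
  have hnu : ∀ k, muPMF (n-1) x r0 r1 k = ν k := fun k => by rw [mu_eq, hC]
  have eA : muPMF n (x+1) r0 r1 j = r0 * (if j = 0 then 0 else ν (j-1)) + (1-r0) * ν j := by
    rw [mu_eq, hA]
    have hterm : ∀ a ∈ Finset.range (j+1), binP (x+1) r0 a * binP m2 r1 (j-a)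
        = (if a = 0 then 0 else r0 * (binP x r0 (a-1) * binP m2 r1 (j-a)))
          + (1-r0) * (binP x r0 a * binP m2 r1 (j-a)) := by
      intro a _
      rw [binP_succ]
      rcases eq_or_ne a 0 with h | h <;> simp [h] <;> ring
    rw [Finset.sum_congr rfl hterm, Finset.sum_add_distrib]
    congr 1
    · cases j with
      | zero => simp
      | succ j' =>
        rw [Finset.sum_range_succ']
        simp only [Nat.succ_ne_zero, if_false, if_pos, Nat.add_sub_cancel,
          Nat.succ_sub_succ, if_neg (Nat.succ_ne_zero _)]
        rw [← Finset.mul_sum]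
        simp [hν]
    · rw [← Finset.mul_sum]
  have eB : muPMF n x r0 r1 j = r1 * (if j = 0 then 0 else ν (j-1)) + (1-r1) * ν j := by
    rw [mu_eq, show n - x = m2 + 1 by omega]
    have hterm : ∀ a ∈ Finset.range (j+1), binP x r0 a * binP (m2+1) r1 (j-a)
        = (if j - a = 0 then 0 else r1 * (binP x r0 a * binP m2 r1 (j-a-1)))
          + (1-r1) * (binP x r0 a * binP m2 r1 (j-a)) := by
      intro a _
      rw [binP_succ]
      rcases eq_or_ne (j-a) 0 with h | h <;> simp [h] <;> ring
    rw [Finset.sum_congr rfl hterm, Finset.sum_add_distrib]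
    congr 1
    · cases j with
      | zero => simp
      | succ j' =>
        rw [Finset.sum_range_succ]
        simp only [Nat.sub_self, if_pos, add_zero]
        have hterm2 : ∀ a ∈ Finset.range (j'+1),
            (if j'+1 - a = 0 then (0:ℝ) else r1 * (binP x r0 a * binP m2 r1 (j'+1-a-1)))
            = r1 * (binP x r0 a * binP m2 r1 (j'-a)) := by
          intro a ha
          simp only [Finset.mem_range] at ha
          rw [if_neg (by omega), show j'+1-a-1 = j'-a by omega]
        rw [Finset.sum_congr rfl hterm2, ← Finset.mul_sum]
        simp [hν]
    · rw [← Finset.mul_sum]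
  simp_rw [eA, eB, hnu]
  ring

lemma step_bound {r0 r1 : ℝ} (h00 : 0 ≤ r0) (h01 : r0 ≤ 1) (h10 : 0 ≤ r1) (h11 : r1 ≤ 1)
    (hle : r1 ≤ r0) (n x : ℕ) (hx : x + 1 ≤ n) :
    ∑ j ∈ Finset.range (n+1), |muPMF n (x+1) r0 r1 j - muPMF n x r0 r1 j|
      ≤ 2 * (r0 - r1) := by
  set ν : ℕ → ℝ := fun k => muPMF (n-1) x r0 r1 k with hν
  have hνnn : ∀ k, 0 ≤ ν k := fun k => mu_nonneg h00 h01 h10 h11 _ _ _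
  have hr : (0:ℝ) ≤ r0 - r1 := by linarith
  have key : ∀ j, |muPMF n (x+1) r0 r1 j - muPMF n x r0 r1 j|
      ≤ (r0 - r1) * ((if j = 0 then 0 else ν (j-1)) + ν j) := by
    intro j
    rw [mu_step n x hx, abs_mul, abs_of_nonneg hr]
    apply mul_le_mul_of_nonneg_left _ hr
    have h1 : (0:ℝ) ≤ (if j = 0 then 0 else ν (j-1)) := by
      split
      · exact le_refl 0
      · exact hνnn _
    have h2 := hνnn j
    rw [abs_sub_le_iff]
    constructor <;> linarith
  have S1 : ∑ j ∈ Finset.range (n+1), (if j = 0 then (0:ℝ) else ν (j-1)) ≤ 1 := by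
    rw [Finset.sum_range_succ']
    simp only [Nat.succ_ne_zero, if_neg (Nat.succ_ne_zero _), Nat.add_sub_cancel,
      if_pos, add_zero]
    simpa using sum_mu_le h00 h01 h10 h11 (n-1) x n
  have S2 : ∑ j ∈ Finset.range (n+1), ν j ≤ 1 := sum_mu_le h00 h01 h10 h11 (n-1) x (n+1)
  calc ∑ j ∈ Finset.range (n+1), |muPMF n (x+1) r0 r1 j - muPMF n x r0 r1 j|
      ≤ ∑ j ∈ Finset.range (n+1), (r0 - r1) * ((if j = 0 then 0 else ν (j-1)) + ν j) :=
        Finset.sum_le_sum fun j _ => key j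
    _ = (r0 - r1) * ((∑ j ∈ Finset.range (n+1), (if j = 0 then (0:ℝ) else ν (j-1)))
          + ∑ j ∈ Finset.range (n+1), ν j) := by
        rw [← Finset.mul_sum, Finset.sum_add_distrib]
    _ ≤ (r0 - r1) * (1 + 1) := by
        apply mul_le_mul_of_nonneg_left _ hr
        exact add_le_add S1 S2
    _ = 2 * (r0 - r1) := by ring

lemma tele_bound {r0 r1 : ℝ} (h00 : 0 ≤ r0) (h01 : r0 ≤ 1) (h10 : 0 ≤ r1) (h11 : r1 ≤ 1)
    (hle : r1 ≤ r0) (n : ℕ) :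
    ∀ d x : ℕ, x + d ≤ n →
      ∑ j ∈ Finset.range (n+1), |muPMF n (x+d) r0 r1 j - muPMF n x r0 r1 j|
        ≤ (d : ℝ) * (2 * (r0 - r1)) := by
  intro d
  induction d with
  | zero => intro x _; simp
  | succ d ih =>
    intro x hx
    have hr : (0:ℝ) ≤ r0 - r1 := by linarith
    calc ∑ j ∈ Finset.range (n+1), |muPMF n (x+(d+1)) r0 r1 j - muPMF n x r0 r1 j|
        ≤ ∑ j ∈ Finset.range (n+1), (|muPMF n ((x+d)+1) r0 r1 j - muPMF n (x+d) r0 r1 j|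
            + |muPMF n (x+d) r0 r1 j - muPMF n x r0 r1 j|) := by
          apply Finset.sum_le_sum
          intro j _
          have h := abs_sub_le (muPMF n (x+(d+1)) r0 r1 j) (muPMF n (x+d) r0 r1 j)
            (muPMF n x r0 r1 j)
          calc |muPMF n (x+(d+1)) r0 r1 j - muPMF n x r0 r1 j|
              ≤ |muPMF n (x+(d+1)) r0 r1 j - muPMF n (x+d) r0 r1 j|
                + |muPMF n (x+d) r0 r1 j - muPMF n x r0 r1 j| := h
            _ = _ := by rw [show x+(d+1) = (x+d)+1 by omega]
      _ = (∑ j ∈ Finset.range (n+1), |muPMF n ((x+d)+1) r0 r1 j - muPMF n (x+d) r0 r1 j|)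
            + ∑ j ∈ Finset.range (n+1), |muPMF n (x+d) r0 r1 j - muPMF n x r0 r1 j| :=
          Finset.sum_add_distrib
      _ ≤ 2 * (r0 - r1) + (d : ℝ) * (2 * (r0 - r1)) :=
          add_le_add (step_bound h00 h01 h10 h11 hle n (x+d) (by omega)) (ih x (by omega))
      _ = ((d+1 : ℕ) : ℝ) * (2 * (r0 - r1)) := by push_cast; ring

lemma tv_half {r0 r1 : ℝ} (h00 : 0 ≤ r0) (h01 : r0 ≤ 1) (h10 : 0 ≤ r1) (h11 : r1 ≤ 1)
    (hle : r1 ≤ r0) (n x y : ℕ) (hxy : x ≤ y) (hy : y ≤ n) :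
    ∑ j ∈ Finset.range (n+1), |muPMF n y r0 r1 j - muPMF n x r0 r1 j|
      ≤ (n : ℝ) * (2 * (r0 - r1)) := by
  have hr : (0:ℝ) ≤ r0 - r1 := by linarith
  rw [show y = x + (y - x) by omega]
  calc ∑ j ∈ Finset.range (n+1), |muPMF n (x + (y-x)) r0 r1 j - muPMF n x r0 r1 j|
      ≤ ((y - x : ℕ) : ℝ) * (2 * (r0 - r1)) :=
        tele_bound h00 h01 h10 h11 hle n (y-x) x (by omega)
    _ ≤ (n : ℝ) * (2 * (r0 - r1)) := by
        apply mul_le_mul_of_nonneg_right _ (by linarith)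
        exact Nat.cast_le.2 (by omega)

theorem phi_mixing_estimate (n : ℕ) (hn : 1 ≤ n) (q t : ℝ) (hq : 0 < q) (ht : 0 ≤ t) :
    (q + Real.exp (-(1 + q) * t)) / (1 + q) ∈ Set.Icc (0 : ℝ) 1 ∧
    q * (1 - Real.exp (-(1 + q) * t)) / (1 + q) ∈ Set.Icc (0 : ℝ) 1 ∧
    ∀ x y : ℕ, x ≤ n → y ≤ n →
      ∑ j ∈ Finset.range (n + 1),
          |muPMF n x ((q + Real.exp (-(1 + q) * t)) / (1 + q))
              (q * (1 - Real.exp (-(1 + q) * t)) / (1 + q)) j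
            - muPMF n y ((q + Real.exp (-(1 + q) * t)) / (1 + q))
              (q * (1 - Real.exp (-(1 + q) * t)) / (1 + q)) j|
        ≤ 2 * (n : ℝ) * Real.exp (-(1 + q) * t) := by
  set E := Real.exp (-(1 + q) * t) with hE
  have hE0 : 0 < E := Real.exp_pos _
  have hE1 : E ≤ 1 := by
    calc E = Real.exp (-(1 + q) * t) := hE
      _ ≤ Real.exp 0 := Real.exp_le_exp.2 (by nlinarith)
      _ = 1 := Real.exp_zero
  set r0 := (q + E) / (1 + q) with hr0
  set r1 := q * (1 - E) / (1 + q) with hr1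
  have h1q : (0:ℝ) < 1 + q := by linarith
  have h00 : 0 ≤ r0 := div_nonneg (by linarith) (le_of_lt h1q)
  have h01 : r0 ≤ 1 := by rw [hr0, div_le_one h1q]; linarith
  have h10 : 0 ≤ r1 := div_nonneg (by nlinarith) (le_of_lt h1q)
  have h11 : r1 ≤ 1 := by rw [hr1, div_le_one h1q]; nlinarith
  have hdiff : r0 - r1 = E := by
    rw [hr0, hr1]
    field_simp
    ring
  have hle : r1 ≤ r0 := by linarith
  refine ⟨⟨h00, h01⟩, ⟨h10, h11⟩, ?_⟩
  intro x y hx hy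
  have hfinal : (n : ℝ) * (2 * (r0 - r1)) = 2 * (n : ℝ) * E := by rw [hdiff]; ring
  rcases le_total x y with hxy | hxy
  · rw [Finset.sum_congr rfl (fun j _ => abs_sub_comm (muPMF n x r0 r1 j) (muPMF n y r0 r1 j))]
    calc ∑ j ∈ Finset.range (n+1), |muPMF n y r0 r1 j - muPMF n x r0 r1 j|
        ≤ (n : ℝ) * (2 * (r0 - r1)) := tv_half h00 h01 h10 h11 hle n x y hxy hy
      _ = 2 * (n : ℝ) * E := hfinal
  · calc ∑ j ∈ Finset.range (n+1), |muPMF n x r0 r1 j - muPMF n y r0 r1 j|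
        ≤ (n : ℝ) * (2 * (r0 - r1)) := tv_half h00 h01 h10 h11 hle n y x hxy hx
      _ = 2 * (n : ℝ) * E := hfinal
end
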